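/- arXiv:1704.01269 — 12 statements merged into one kernel-verified Lean document; each statement's English description precedes it below -/
import Mathlib

section
/- Let σ and τ be the elements of PGL(2,k) given by the classes of the matrices [[1,0],[0,α²]] and [[0,1],[α,0]] respectively. Then the subgroup of PGL(2,k) generated by σ and τ is isomorphic to the dihedral group of order q−1 (in Mathlib, DihedralGroup ((q−1)/2)). -/
open Matrix

/-- `PGL(2,k)`: the projective general linear group, i.e. `GL(2,k)` modulo the scalar
matrices (which form exactly the center of `GL(2,k)` for a field `k`). -/
noncomputable abbrev PGL2 (k : Type*) [Field k] :=
  GL (Fin 2) k ⧸ Subgroup.center (GL (Fin 2) k)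

section Aux

variable {K : Type*} [Field K]

lemma scalar_of_mem_center {g : GL (Fin 2) K} (h : g ∈ Subgroup.center (GL (Fin 2) K)) :
    ∃ c : K, (g : Matrix (Fin 2) (Fin 2) K) = c • 1 := by
  have h2 : (g : Matrix (Fin 2) (Fin 2) K) ∈ Set.range (Matrix.scalar (Fin 2)) := by
    apply Matrix.mem_range_scalar_of_commute_transvectionStruct
    intro t
    have ht : (TransvectionStruct.toMatrix t).det ≠ 0 := by
      rw [t.det]; exact one_ne_zero
    have hc := (Subgroup.mem_center_iff.mp h)
      (Matrix.GeneralLinearGroup.mkOfDetNeZero t.toMatrix ht)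
    have := congrArg Units.val hc
    exact (by simpa [Units.val_mul] using this :
      t.toMatrix * (g : Matrix (Fin 2) (Fin 2) K) = (g : Matrix (Fin 2) (Fin 2) K) * t.toMatrix)
  obtain ⟨c, hc⟩ := h2
  refine ⟨c, ?_⟩
  rw [← hc]
  ext i j
  simp [Matrix.scalar_apply, Matrix.smul_apply, Matrix.one_apply, Matrix.diagonal]

lemma mem_center_of_scalar {g : GL (Fin 2) K} {c : K}
    (h : (g : Matrix (Fin 2) (Fin 2) K) = c • 1) : g ∈ Subgroup.center (GL (Fin 2) K) := by
  rw [Subgroup.mem_center_iff]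
  intro b
  apply Units.ext
  show (b : Matrix (Fin 2) (Fin 2) K) * g = (g : Matrix (Fin 2) (Fin 2) K) * b
  rw [h, Matrix.mul_smul, Matrix.smul_mul, Matrix.mul_one, Matrix.one_mul]

lemma smul_one_fin_two (c : K) : c • (1 : Matrix (Fin 2) (Fin 2) K) = !![c, 0; 0, c] := by
  ext i j
  fin_cases i <;> fin_cases j <;> simp [Matrix.one_apply]

lemma diag_pow_fin_two (β : K) (m : ℕ) :
    (!![(1 : K), 0; 0, β]) ^ m = !![1, 0; 0, β ^ m] := by
  induction m with
  | zero => simp [Matrix.one_fin_two]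
  | succ m ih => rw [pow_succ, ih, Matrix.mul_fin_two, pow_succ]; norm_num

/-- Generic dihedral recognition lemma. -/
lemma dihedral_of_gen {G : Type*} [Group G] {s t : G} {n : ℕ} (hn : 2 ≤ n)
    (hs : orderOf s = n) (ht2 : t * t = 1) (hst : t * s * t = s⁻¹)
    (htz : t ∉ Subgroup.zpowers s) :
    Nonempty (↥(Subgroup.closure {s, t}) ≃* DihedralGroup n) := by
  haveI : NeZero n := ⟨by omega⟩
  haveI : Fact (1 < n) := ⟨by omega⟩
  set ps : ZMod n → G := fun i => s ^ i.val with hps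
  have ps_add : ∀ i j : ZMod n, ps (i + j) = ps i * ps j := by
    intro i j
    show s ^ _ = s ^ _ * s ^ _
    rw [← pow_add]
    apply pow_eq_pow_iff_modEq.mpr
    rw [hs, ZMod.val_add]
    exact Nat.mod_modEq _ _
  have ps_zero : ps 0 = 1 := by simp [hps]
  have ps_neg : ∀ i : ZMod n, ps (-i) = (ps i)⁻¹ := by
    intro i
    have h := ps_add (-i) i
    rw [neg_add_cancel, ps_zero] at h
    exact eq_inv_of_mul_eq_one_left h.symm
  have st : s * t = t * s⁻¹ := by
    have h : t * (t * s * t) = t * s⁻¹ := by rw [hst]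
    rwa [show t * (t * s * t) = t * t * (s * t) by group, ht2, one_mul] at h
  have ts : ∀ m : ℕ, s ^ m * t = t * (s ^ m)⁻¹ := by
    intro m
    induction m with
    | zero => simp
    | succ m ih =>
      rw [pow_succ, mul_assoc, st, ← mul_assoc, ih, mul_assoc, ← _root_.mul_inv_rev]
      congr 1
      rw [← pow_succ, ← pow_succ']
  have pst : ∀ i : ZMod n, ps i * t = t * (ps i)⁻¹ := fun i => ts i.val
  let φ : DihedralGroup n →* G :=
  { toFun := fun x => match x with
      | DihedralGroup.r i => ps i
      | DihedralGroup.sr i => t * ps i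
    map_one' := by rw [DihedralGroup.one_def]; exact ps_zero
    map_mul' := by
      rintro (i | i) (j | j)
      · show ps (i + j) = ps i * ps j; exact ps_add i j
      · show t * ps (j - i) = ps i * (t * ps j)
        rw [← mul_assoc, pst, mul_assoc, ← ps_neg, ← ps_add, neg_add_eq_sub]
      · show t * ps (i + j) = t * ps i * ps j
        rw [ps_add, mul_assoc]
      · show ps (j - i) = t * ps i * (t * ps j)
        rw [mul_assoc, ← mul_assoc (ps i), pst, ← mul_assoc, ← mul_assoc, ht2, one_mul,
          ← ps_neg, ← ps_add, neg_add_eq_sub]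
  }
  have hinj : Function.Injective φ := by
    apply (injective_iff_map_eq_one φ).mpr
    rintro (i | i) hx
    · have hpi : s ^ i.val = 1 := hx
      have hd : n ∣ i.val := by
        have hd' : orderOf s ∣ i.val := orderOf_dvd_of_pow_eq_one hpi
        rwa [hs] at hd'
      have hiz : i.val = 0 := Nat.eq_zero_of_dvd_of_lt hd (ZMod.val_lt i)
      rw [DihedralGroup.one_def]
      congr 1
      exact (ZMod.val_eq_zero i).mp hiz
    · exfalso
      apply htz
      have ht : t = (ps i)⁻¹ := eq_inv_of_mul_eq_one_left hx
      rw [ht]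
      exact Subgroup.inv_mem _ (pow_mem (Subgroup.mem_zpowers s) _)
  have hrange : Subgroup.closure {s, t} = φ.range := by
    apply le_antisymm
    · rw [Subgroup.closure_le]
      rintro x hx
      simp only [Set.mem_insert_iff, Set.mem_singleton_iff] at hx
      rcases hx with h | h
      · refine ⟨DihedralGroup.r 1, ?_⟩
        rw [h]
        show s ^ (1 : ZMod n).val = s
        rw [ZMod.val_one, pow_one]
      · refine ⟨DihedralGroup.sr 0, ?_⟩
        rw [h]
        show t * ps 0 = t
        rw [ps_zero, mul_one]
    · rintro x ⟨y, rfl⟩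
      have hsmem : s ∈ Subgroup.closure {s, t} := Subgroup.subset_closure (by simp)
      have htmem : t ∈ Subgroup.closure {s, t} := Subgroup.subset_closure (by simp)
      cases y with
      | r i => exact pow_mem hsmem _
      | sr i => exact mul_mem htmem (pow_mem hsmem _)
  exact ⟨(MulEquiv.subgroupCongr hrange).trans (MonoidHom.ofInjective hinj).symm⟩

end Aux

/-- The subgroup of `PGL(2,k)` generated by the classes of the matrices
`[[1,0],[0,α²]]` and `[[0,1],[α,0]]` is isomorphic to the dihedral group of order `q - 1`. -/
theorem stmt_0 (p e q : ℕ) (hp : p.Prime) (hp2 : p ≠ 2) (hq : q = p ^ e) (hq5 : 5 ≤ q)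
    (k : Type*) [Field k] [IsAlgClosed k] [CharP k p]
    (α : kˣ) (hαq : (α : k) ^ q = (α : k)) (hord : orderOf α = q - 1)
    (σ τ : PGL2 k)
    (hσ : σ = QuotientGroup.mk (Matrix.GeneralLinearGroup.mkOfDetNeZero
      !![(1 : k), 0; 0, (α : k) ^ 2] (by simp [Matrix.det_fin_two_of])))
    (hτ : τ = QuotientGroup.mk (Matrix.GeneralLinearGroup.mkOfDetNeZero
      !![(0 : k), 1; (α : k), 0] (by simp [Matrix.det_fin_two_of]))) :
    Nonempty (↥(Subgroup.closure {σ, τ}) ≃* DihedralGroup ((q - 1) / 2)) := by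
  -- basic numerology
  have hqodd : Odd q := by rw [hq]; exact (hp.odd_of_ne_two hp2).pow
  obtain ⟨w, hw⟩ := hqodd
  set n : ℕ := (q - 1) / 2 with hn
  have h2n : 2 * n = q - 1 := by omega
  have hn2 : 2 ≤ n := by omega
  -- the lifted matrices
  set MA : Matrix (Fin 2) (Fin 2) k := !![(1 : k), 0; 0, (α : k) ^ 2] with hMA
  set MB : Matrix (Fin 2) (Fin 2) k := !![(0 : k), 1; (α : k), 0] with hMB
  have hdA : MA.det ≠ 0 := by simp [hMA, Matrix.det_fin_two_of]
  have hdB : MB.det ≠ 0 := by simp [hMB, Matrix.det_fin_two_of]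
  set A : GL (Fin 2) k := Matrix.GeneralLinearGroup.mkOfDetNeZero MA hdA with hA
  set B : GL (Fin 2) k := Matrix.GeneralLinearGroup.mkOfDetNeZero MB hdB with hB
  have hcoeA : (A : Matrix (Fin 2) (Fin 2) k) = MA := rfl
  have hcoeB : (B : Matrix (Fin 2) (Fin 2) k) = MB := rfl
  have hσA : σ = QuotientGroup.mk A := hσ
  have hτB : τ = QuotientGroup.mk B := hτ
  -- order of α ^ 2
  have hβord : orderOf (α ^ 2) = n := by
    rw [orderOf_pow' α (two_ne_zero), hord]
    have : Nat.gcd (q - 1) 2 = 2 := by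
      rw [Nat.gcd_comm]; exact Nat.gcd_eq_left (by omega)
    rw [this]
  -- power criterion for σ
  have hσpow : ∀ m : ℕ, σ ^ m = 1 ↔ n ∣ m := by
    intro m
    have hm : σ ^ m = QuotientGroup.mk (A ^ m) := by
      rw [hσA]
      exact (map_pow (QuotientGroup.mk' (Subgroup.center (GL (Fin 2) k))) A m).symm
    rw [hm, QuotientGroup.eq_one_iff]
    constructor
    · intro hc
      obtain ⟨c, hc⟩ := scalar_of_mem_center hc
      rw [Units.val_pow_eq_pow_val, hcoeA, hMA, diag_pow_fin_two, smul_one_fin_two] at hc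
      rw [← Matrix.ext_iff] at hc
      have h00 := hc 0 0
      have h11 := hc 1 1
      simp at h00 h11
      have hu : (α ^ 2 : kˣ) ^ m = 1 := by
        apply Units.ext
        push_cast
        rw [h11, ← h00]
      rw [← hβord]
      exact orderOf_dvd_of_pow_eq_one hu
    · intro hdvd
      have hu : (α ^ 2 : kˣ) ^ m = 1 := by
        rw [← hβord] at hdvd
        exact orderOf_dvd_iff_pow_eq_one.mp hdvd
      have hk : ((α : k) ^ 2) ^ m = 1 := by
        have := congrArg (Units.val) hu
        push_cast at this
        exact this
      have : A ^ m = 1 := by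
        apply Units.ext
        rw [Units.val_pow_eq_pow_val, hcoeA, hMA, diag_pow_fin_two, hk, Units.val_one]
        exact Matrix.one_fin_two.symm
      rw [this]
      exact one_mem _
  -- order of σ
  have hσord : orderOf σ = n := by
    apply Nat.dvd_antisymm
    · exact orderOf_dvd_of_pow_eq_one ((hσpow n).mpr dvd_rfl)
    · exact (hσpow (orderOf σ)).mp (pow_orderOf_eq_one σ)
  -- τ² = 1
  have hτ2 : τ * τ = 1 := by
    rw [hτB, ← QuotientGroup.mk_mul, QuotientGroup.eq_one_iff]
    apply mem_center_of_scalar (c := (α : k))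
    rw [Units.val_mul, hcoeB, hMB, Matrix.mul_fin_two, smul_one_fin_two]
    norm_num
  -- τστ = σ⁻¹
  have hτστ : τ * σ * τ = σ⁻¹ := by
    apply eq_inv_of_mul_eq_one_left
    rw [hτB, hσA, ← QuotientGroup.mk_mul, ← QuotientGroup.mk_mul, ← QuotientGroup.mk_mul,
      QuotientGroup.eq_one_iff]
    apply mem_center_of_scalar (c := (α : k) ^ 3)
    rw [Units.val_mul, Units.val_mul, Units.val_mul, hcoeA, hcoeB, hMA, hMB,
      Matrix.mul_fin_two, Matrix.mul_fin_two, Matrix.mul_fin_two, smul_one_fin_two]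
    ext i j
    fin_cases i <;> fin_cases j <;> simp <;> ring
  -- τ not a power of σ
  have hτz : τ ∉ Subgroup.zpowers σ := by
    intro hmem
    obtain ⟨z, hz⟩ := Subgroup.mem_zpowers_iff.mp hmem
    have key : ∀ m : ℕ, σ ^ m * τ ≠ 1 := by
      intro m hone
      rw [hσA, hτB, ← QuotientGroup.mk_pow, ← QuotientGroup.mk_mul,
        QuotientGroup.eq_one_iff] at hone
      obtain ⟨c, hc⟩ := scalar_of_mem_center hone
      rw [Units.val_mul, Units.val_pow_eq_pow_val, hcoeA, hcoeB, hMA, hMB, diag_pow_fin_two,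
        Matrix.mul_fin_two, smul_one_fin_two] at hc
      rw [← Matrix.ext_iff] at hc
      have h01 := hc 0 1
      simp at h01
    have hnat : σ ^ ((z % (n : ℤ)).toNat) = τ := by
      rw [← zpow_natCast, Int.toNat_of_nonneg (Int.emod_nonneg z (by omega)), ← hσord,
        zpow_mod_orderOf, hz]
    exact key _ (by rw [hnat, hτ2])
  exact dihedral_of_gen hn2 hσord hτ2 hτστ hτz
end

section
/- The rational function f = X^{(q−1)/2} − X^{−(q−1)/2} ∈ k(X) is invariant under the substitutions corresponding to σ and τ: the k-algebra automorphism of k(X) sending X to α²·X fixes f, and the k-algebra automorphism of k(X) sending X to α·X⁻¹ fixes f. -/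
open RatFunc

/-- The rational function `f = X^((q-1)/2) - X^(-(q-1)/2) ∈ k(X)` is fixed by the
`k`-algebra automorphism of `k(X)` sending `X` to `α² * X`, and by the one sending
`X` to `α * X⁻¹`. -/
theorem stmt_1 (p e q : ℕ) (hp : p.Prime) (hp2 : p ≠ 2) (hq : q = p ^ e) (hq5 : 5 ≤ q)
    (k : Type*) [Field k] [IsAlgClosed k] [CharP k p]
    (α : kˣ) (hαq : (α : k) ^ q = (α : k)) (hord : orderOf α = q - 1)
    (f : RatFunc k)
    (hf : f = RatFunc.X ^ ((q - 1) / 2) - (RatFunc.X ^ ((q - 1) / 2))⁻¹) :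
    (∀ φ : RatFunc k ≃ₐ[k] RatFunc k,
        φ RatFunc.X = RatFunc.C ((α : k) ^ 2) * RatFunc.X → φ f = f) ∧
    (∀ φ : RatFunc k ≃ₐ[k] RatFunc k,
        φ RatFunc.X = RatFunc.C (α : k) * RatFunc.X⁻¹ → φ f = f) := by
  set m : ℕ := (q - 1) / 2 with hm
  have hodd : Odd q := by
    subst hq
    exact (hp.odd_of_ne_two hp2).pow
  have heven : Even (q - 1) := Nat.Odd.sub_odd hodd odd_one
  have h2m : 2 * m = q - 1 := Nat.mul_div_cancel' heven.two_dvd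
  have hmlt : m < q - 1 := by omega
  have hmpos : 0 < m := by omega
  have hαq1 : α ^ (q - 1) = 1 := by rw [← hord]; exact pow_orderOf_eq_one α
  have hαq1' : (α : k) ^ (q - 1) = 1 := by
    have := congrArg (Units.val) hαq1
    simpa using this
  have hαm2 : ((α : k) ^ m) ^ 2 = 1 := by
    rw [← pow_mul, mul_comm, h2m, hαq1']
  have hαmne : (α : k) ^ m ≠ 1 := by
    intro h
    have hu : α ^ m = 1 := by
      ext
      simpa using h
    have := orderOf_dvd_of_pow_eq_one hu
    rw [hord] at this
    have := Nat.le_of_dvd hmpos this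
    omega
  have hαm : (α : k) ^ m = -1 := by
    have hfac : ((α : k) ^ m - 1) * ((α : k) ^ m + 1) = 0 := by
      have : ((α : k) ^ m - 1) * ((α : k) ^ m + 1) = ((α : k) ^ m) ^ 2 - 1 := by ring
      rw [this, hαm2, sub_self]
    rcases mul_eq_zero.mp hfac with h | h
    · exact absurd (by linear_combination h) hαmne
    · linear_combination h
  have hXm : (RatFunc.X : RatFunc k) ^ m ≠ 0 := pow_ne_zero m RatFunc.X_ne_zero
  constructor
  · intro φ hφ
    rw [hf, map_sub, map_inv₀, map_pow, hφ, mul_pow, ← map_pow, ← pow_mul,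
      h2m, hαq1', map_one, one_mul]
  · intro φ hφ
    rw [hf, map_sub, map_inv₀, map_pow, hφ, mul_pow, ← map_pow, hαm, map_neg, map_one,
      inv_pow, neg_one_mul, inv_neg, inv_inv]
    ring
end

section
/- The rational function g = (X−1)/(X^q − X) ∈ k(X) is invariant under the substitution corresponding to η: the k-algebra automorphism of k(X) sending X to (X + α − 1)/α fixes g, i.e., g((X+α−1)/α) = g(X) in k(X). -/
open RatFunc

/-- The rational function `g = (X-1)/(X^q - X) ∈ k(X)` is fixed by the `k`-algebra
automorphism of `k(X)` sending `X` to `(X + α - 1)/α`. -/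
theorem stmt_3 (p e q : ℕ) (hp : p.Prime) (hp2 : p ≠ 2) (hq : q = p ^ e) (hq5 : 5 ≤ q)
    (k : Type*) [Field k] [IsAlgClosed k] [CharP k p]
    (α : kˣ) (hαq : (α : k) ^ q = (α : k)) (hord : orderOf α = q - 1)
    (g : RatFunc k)
    (hg : g = (RatFunc.X - 1) / (RatFunc.X ^ q - RatFunc.X)) :
    ∀ φ : RatFunc k ≃ₐ[k] RatFunc k,
      φ RatFunc.X = (RatFunc.X + RatFunc.C (α : k) - 1) / RatFunc.C (α : k) → φ g = g := by
  intro φ hφ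
  haveI : Fact p.Prime := ⟨hp⟩
  haveI : CharP (RatFunc k) p :=
    charP_of_injective_algebraMap (algebraMap k (RatFunc k)).injective p
  set a : RatFunc k := RatFunc.C (α : k) with ha
  have ha0 : a ≠ 0 := by
    rw [ha]
    exact (map_ne_zero (RatFunc.C (K := k))).mpr α.ne_zero
  have haq : a ^ q = a := by rw [ha, ← map_pow, hαq]
  have hX : (RatFunc.X : RatFunc k) ^ q - RatFunc.X ≠ 0 := by
    have hpoly : (Polynomial.X ^ q - Polynomial.X : Polynomial k) ≠ 0 := by
      intro h
      have h2 : (Polynomial.X ^ q : Polynomial k) = Polynomial.X := sub_eq_zero.mp h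
      have := congrArg Polynomial.natDegree h2
      simp [Polynomial.natDegree_X_pow] at this
      omega
    have := RatFunc.algebraMap_ne_zero hpoly
    simpa [map_sub, map_pow, RatFunc.algebraMap_X] using this
  have hfrob : (RatFunc.X + a - 1 : RatFunc k) ^ q = RatFunc.X ^ q + a - 1 := by
    have h1 : (RatFunc.X + (a - 1) : RatFunc k) ^ q = RatFunc.X ^ q + (a - 1) := by
      subst hq
      rw [add_pow_char_pow, sub_pow_char_pow, one_pow, haq]
    calc (RatFunc.X + a - 1 : RatFunc k) ^ q = (RatFunc.X + (a - 1)) ^ q := by ring_nf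
    _ = RatFunc.X ^ q + (a - 1) := h1
    _ = RatFunc.X ^ q + a - 1 := by ring
  rw [hg, map_div₀, map_sub, map_sub, map_pow, map_one, hφ]
  have h1 : ((RatFunc.X + a - 1) / a - 1 : RatFunc k) = (RatFunc.X - 1) / a := by
    field_simp
    ring
  have h2 : (((RatFunc.X + a - 1) / a) ^ q - (RatFunc.X + a - 1) / a : RatFunc k)
      = (RatFunc.X ^ q - RatFunc.X) / a := by
    rw [div_pow, hfrob, haq, div_sub_div_same]
    congr 1
    ring
  rw [h1, h2]
  exact div_div_div_cancel_right₀ ha0 _ _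
end

section
/- Let g = (X−1)/(X^q − X) ∈ k(X). Then the field extension k(X) over the intermediate field k(g) generated by g over k is a Galois extension, and its Galois group is isomorphic to the cyclic group Z/(q−1)Z. (This is the field-theoretic content of the statement that P₂ = (1:0:0) is an inner Galois point for the curve C₁ parametrized by (s:t) ↦ (s^{(q+1)/2}t^{(q−1)/2} : (s−t)t^{q−1} : s^q − st^{q−1}), with cyclic Galois group of order q−1.) -/
open Polynomial nonZeroDivisors IntermediateField

namespace Stmt5Aux

variable {k : Type*} [Field k]

lemma algebraMap_mem_adjoinX (p : k[X]) :
    algebraMap k[X] (RatFunc k) p ∈ IntermediateField.adjoin k {RatFunc.X} := by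
  induction p using Polynomial.induction_on' with
  | add p q hp hq => rw [map_add]; exact add_mem hp hq
  | monomial m a =>
      rw [← Polynomial.C_mul_X_pow_eq_monomial, map_mul, map_pow, RatFunc.algebraMap_X]
      exact mul_mem (by rw [RatFunc.algebraMap_C, ← RatFunc.algebraMap_eq_C]; exact
          (IntermediateField.adjoin k {RatFunc.X}).algebraMap_mem a)
        (pow_mem (IntermediateField.mem_adjoin_simple_self k RatFunc.X) m)

lemma adjoinX_top : IntermediateField.adjoin k {RatFunc.X} =
    (⊤ : IntermediateField k (RatFunc k)) := by
  rw [eq_top_iff]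
  intro r _
  rw [← RatFunc.num_div_denom r]
  exact div_mem (algebraMap_mem_adjoinX _) (algebraMap_mem_adjoinX _)

lemma algHom_ext {L : Type*} [Field L] [Algebra k L]
    (ψ₁ ψ₂ : RatFunc k →ₐ[k] L) (h : ψ₁ RatFunc.X = ψ₂ RatFunc.X) : ψ₁ = ψ₂ := by
  have key : ψ₁.comp (IsScalarTower.toAlgHom k k[X] (RatFunc k))
      = ψ₂.comp (IsScalarTower.toAlgHom k k[X] (RatFunc k)) := by
    apply Polynomial.algHom_ext
    simpa [RatFunc.algebraMap_X] using h
  refine AlgHom.ext fun r => ?_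
  have h1 := AlgHom.congr_fun key r.num
  have h2 := AlgHom.congr_fun key r.denom
  simp only [AlgHom.comp_apply, IsScalarTower.toAlgHom_apply] at h1 h2
  rw [← RatFunc.num_div_denom r, map_div₀, map_div₀, h1, h2]

lemma equiv_nonZeroDivisors (e : k[X] ≃ₐ[k] k[X]) :
    k[X]⁰ ≤ (k[X]⁰).comap (e : k[X] →ₐ[k] k[X]) := by
  intro p hp
  rw [mem_nonZeroDivisors_iff_ne_zero] at hp
  rw [Submonoid.mem_comap, mem_nonZeroDivisors_iff_ne_zero]
  simpa using hp

lemma mapAlgHom_algebraMap (e : k[X] ≃ₐ[k] k[X]) (p : k[X]) :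
    RatFunc.mapAlgHom (e : k[X] →ₐ[k] k[X]) (equiv_nonZeroDivisors e)
      (algebraMap k[X] (RatFunc k) p) = algebraMap k[X] (RatFunc k) (e p) := by
  have := RatFunc.map_apply_div (F := k[X] →ₐ[k] k[X])
    (φ := (e : k[X] →ₐ[k] k[X])) (hφ := equiv_nonZeroDivisors e) p 1
  simp only [map_one, div_one] at this
  exact this

/-- Lift a polynomial algebra automorphism to `RatFunc`. -/
noncomputable def ratfuncAut (e : k[X] ≃ₐ[k] k[X]) : RatFunc k ≃ₐ[k] RatFunc k :=
  AlgEquiv.ofAlgHom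
    (RatFunc.mapAlgHom (e : k[X] →ₐ[k] k[X]) (equiv_nonZeroDivisors e))
    (RatFunc.mapAlgHom (e.symm : k[X] →ₐ[k] k[X]) (equiv_nonZeroDivisors e.symm))
    (algHom_ext _ _ (by
      rw [AlgHom.comp_apply, AlgHom.id_apply, ← RatFunc.algebraMap_X,
        mapAlgHom_algebraMap, mapAlgHom_algebraMap, AlgEquiv.apply_symm_apply]))
    (algHom_ext _ _ (by
      rw [AlgHom.comp_apply, AlgHom.id_apply, ← RatFunc.algebraMap_X,
        mapAlgHom_algebraMap, mapAlgHom_algebraMap, AlgEquiv.symm_apply_apply]))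

lemma ratfuncAut_X (e : k[X] ≃ₐ[k] k[X]) :
    ratfuncAut e RatFunc.X = algebraMap k[X] (RatFunc k) (e Polynomial.X) := by
  rw [← RatFunc.algebraMap_X]
  exact mapAlgHom_algebraMap e Polynomial.X

end Stmt5Aux

open RatFunc Stmt5Aux

/-- For `g = (X-1)/(X^q - X) ∈ k(X)`, the extension `k(X)/k(g)` is Galois with
Galois group isomorphic to the cyclic group `ℤ/(q-1)ℤ`. -/
theorem stmt_5 (p e q : ℕ) (hp : p.Prime) (hp2 : p ≠ 2) (hq : q = p ^ e) (hq5 : 5 ≤ q)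
    (k : Type*) [Field k] [IsAlgClosed k] [CharP k p]
    (g : RatFunc k)
    (hg : g = (RatFunc.X - 1) / (RatFunc.X ^ q - RatFunc.X)) :
    IsGalois (IntermediateField.adjoin k {g}) (RatFunc k) ∧
      Nonempty ((RatFunc k ≃ₐ[IntermediateField.adjoin k {g}] RatFunc k) ≃*
        Multiplicative (ZMod (q - 1))) := by
  classical
  haveI := Fact.mk hp
  set n := q - 1 with hn
  have hq1 : 1 < q := by omega
  have hn0 : 0 < n := by omega
  have hqn : n + 1 = q := by omega
  have he0 : e ≠ 0 := by rintro rfl; simp at hq; omega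
  -- characteristic facts
  haveI : CharP (RatFunc k) p :=
    charP_of_injective_algebraMap (algebraMap k (RatFunc k)).injective p
  have hpn : ¬ (p : ℕ) ∣ n := by
    intro hdvd
    have hpq : p ∣ q := hq ▸ dvd_pow_self p he0
    have h1 : p ∣ q - n := Nat.dvd_sub hpq hdvd
    have h2 : q - n = 1 := by omega
    rw [h2] at h1
    have := Nat.le_of_dvd one_pos h1
    have := hp.two_le
    omega
  have hnk : (n : k) ≠ 0 := by
    intro h
    exact hpn ((CharP.cast_eq_zero_iff k p n).mp h)
  haveI : NeZero ((n : k)) := ⟨hnk⟩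
  obtain ⟨ζ, hζ⟩ := HasEnoughRootsOfUnity.exists_primitiveRoot k n
  have hζ0 : ζ ≠ 0 := hζ.ne_zero hn0.ne'
  -- notation
  set c : k →+* RatFunc k := (algebraMap k (RatFunc k)) with hc
  have hcinj : Function.Injective c := c.injective
  have hζ' : IsPrimitiveRoot (c ζ) n := hζ.map_of_injective hcinj
  set y : RatFunc k := RatFunc.X - 1 with hy
  have hy0 : y ≠ 0 := by
    have h1 : y = algebraMap k[X] (RatFunc k) (Polynomial.X - 1) := by
      rw [map_sub, map_one, RatFunc.algebraMap_X, hy]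
    rw [h1, Ne, FaithfulSMul.algebraMap_eq_zero_iff]
    intro h
    have h2 := congrArg (Polynomial.eval 0) h
    simp at h2
  -- the key identity  X^q - X = y * (y^n - 1)
  have hypow : y ^ q = RatFunc.X ^ q - 1 := by
    subst hq
    rw [hy, sub_pow_char_pow, one_pow]
  have hXq : RatFunc.X ^ q - RatFunc.X = y * (y ^ n - 1) := by
    rw [mul_sub, mul_one, mul_comm, ← pow_succ, hqn, hypow, hy]
    ring
  have hw1 : y ^ n - 1 ≠ 0 := by
    have : y ^ n - 1 = algebraMap k[X] (RatFunc k) ((Polynomial.X - 1) ^ n - 1) := by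
      push_cast [map_sub, map_pow, map_one, RatFunc.algebraMap_X, hy]
      ring
    rw [this, Ne, FaithfulSMul.algebraMap_eq_zero_iff]
    intro h
    have := congrArg (Polynomial.eval 1) h
    simp [zero_pow hn0.ne'] at this
  have hgval : g = (y ^ n - 1)⁻¹ := by
    rw [hg, hXq, div_mul_cancel_left₀ hy0]
  have hg0 : g ≠ 0 := hgval ▸ inv_ne_zero hw1
  set F := IntermediateField.adjoin k {g} with hF
  have hwF : y ^ n ∈ F := by
    have : y ^ n = g⁻¹ + 1 := by rw [hgval, inv_inv]; ring
    rw [this]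
    exact add_mem (inv_mem (IntermediateField.mem_adjoin_simple_self k g)) (one_mem F)
  set w₀ : F := ⟨y ^ n, hwF⟩ with hw₀
  have hα : y ^ n = algebraMap F (RatFunc k) w₀ := rfl
  -- automorphisms
  have key : ∀ a : k, a ≠ 0 → a ^ n = 1 →
      ∃ τ : RatFunc k ≃ₐ[F] RatFunc k, τ y = c a * y := by
    intro a ha han
    haveI := invertibleOfNonzero ha
    set σ : RatFunc k ≃ₐ[k] RatFunc k := ratfuncAut (Polynomial.algEquivCMulXAddC a (1 - a))
      with hσ
    have hσX : σ RatFunc.X = c a * RatFunc.X + c (1 - a) := by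
      rw [hσ, ratfuncAut_X]
      simp only [Polynomial.algEquivCMulXAddC_apply, Polynomial.aeval_X, map_add, map_mul,
        RatFunc.algebraMap_C, RatFunc.algebraMap_X]
      rw [hc, RatFunc.algebraMap_eq_C]
    have hσy : σ y = c a * y := by
      rw [hy, map_sub, map_one, hσX, map_sub, map_one]
      ring
    have hσg : σ g = g := by
      rw [hgval, map_inv₀, map_sub, map_one, map_pow, hσy, mul_pow, ← map_pow, han, map_one,
        one_mul]
    have hσfix : ∀ x ∈ F, σ x = x := by
      intro x hx
      induction hx using IntermediateField.adjoin_induction with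
      | mem x hx => rw [Set.mem_singleton_iff] at hx; rw [hx]; exact hσg
      | algebraMap x => exact σ.commutes x
      | add x y _ _ hx hy => rw [map_add, hx, hy]
      | inv x _ hx => rw [map_inv₀, hx]
      | mul x y _ _ hx hy => rw [map_mul, hx, hy]
    exact ⟨AlgEquiv.ofRingEquiv (f := σ.toRingEquiv) (fun x => hσfix x.1 x.2), hσy⟩
  -- F⟮y⟯ = ⊤
  have hFy : F⟮y⟯ = ⊤ := by
    rw [eq_top_iff]
    intro r _
    have hmem : r ∈ IntermediateField.restrictScalars k F⟮y⟯ := by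
      have hX : RatFunc.X ∈ IntermediateField.restrictScalars k F⟮y⟯ := by
        have : RatFunc.X = y + 1 := by rw [hy]; ring
        rw [this]
        exact add_mem (IntermediateField.mem_adjoin_simple_self F y) (one_mem _)
      have h1 : IntermediateField.adjoin k {RatFunc.X} ≤
          IntermediateField.restrictScalars k F⟮y⟯ :=
        IntermediateField.adjoin_le_iff.mpr (Set.singleton_subset_iff.mpr hX)
      refine h1 ?_
      rw [adjoinX_top (k := k)]
      exact IntermediateField.mem_top
    exact hmem
  have hyInt : IsIntegral F y := by
    refine ⟨Polynomial.X ^ n - Polynomial.C w₀, monic_X_pow_sub_C _ hn0.ne', ?_⟩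
    rw [eval₂_sub, eval₂_X_pow, eval₂_C, ← hα, sub_self]
  haveI : FiniteDimensional F (RatFunc k) := by
    have h1 := IntermediateField.adjoin.finiteDimensional hyInt
    rw [hFy] at h1
    exact ((IntermediateField.topEquiv : (⊤ : IntermediateField F (RatFunc k)) ≃ₐ[F] _)).toLinearEquiv.finiteDimensional

  -- minpoly degree computation
  have haev : (Polynomial.aeval y) (Polynomial.X ^ n - Polynomial.C w₀ : F[X]) = 0 := by
    rw [map_sub, map_pow, aeval_X, aeval_C, ← hα, sub_self]
  have hdvd : minpoly F y ∣ Polynomial.X ^ n - Polynomial.C w₀ := minpoly.dvd _ _ haev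
  have hfne : (Polynomial.X ^ n - Polynomial.C w₀ : F[X]) ≠ 0 := X_pow_sub_C_ne_zero hn0 _
  have hd1 : (minpoly F y).natDegree ≤ n := by
    simpa [natDegree_X_pow_sub_C] using Polynomial.natDegree_le_of_dvd hdvd hfne
  have hd2 : n ≤ (minpoly F y).natDegree := by
    set P := (minpoly F y).map (algebraMap F (RatFunc k)) with hP
    have hP0 : P ≠ 0 := Polynomial.map_ne_zero (minpoly.ne_zero hyInt)
    have hroots : ∀ i < n, (c ζ) ^ i * y ∈ P.roots := by
      intro i hi
      obtain ⟨τ, hτ⟩ := key (ζ ^ i) (pow_ne_zero _ hζ0)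
        (by rw [← pow_mul, mul_comm, pow_mul, hζ.pow_eq_one, one_pow])
      rw [Polynomial.mem_roots hP0]
      have h0 : (Polynomial.aeval (τ y)) (minpoly F y) = 0 := by
        have h3 := Polynomial.aeval_algHom_apply (↑τ : RatFunc k →ₐ[F] RatFunc k) y (minpoly F y)
        rw [minpoly.aeval, map_zero] at h3
        exact h3
      rw [hτ, map_pow] at h0
      rwa [Polynomial.IsRoot, Polynomial.eval_map, ← Polynomial.aeval_def]
    have hScard : ((Finset.range n).image fun i => (c ζ) ^ i * y).card = n := by
      rw [Finset.card_image_of_injOn, Finset.card_range]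
      intro i hi j hj hij
      simp only [Finset.mem_coe, Finset.mem_range] at hi hj
      have := mul_right_cancel₀ hy0 hij
      exact hζ'.pow_inj hi hj this
    calc n = ((Finset.range n).image fun i => (c ζ) ^ i * y).card := hScard.symm
      _ ≤ P.roots.toFinset.card := by
          apply Finset.card_le_card
          intro x hx
          simp only [Finset.mem_image, Finset.mem_range] at hx
          obtain ⟨i, hi, rfl⟩ := hx
          exact Multiset.mem_toFinset.mpr (hroots i hi)
      _ ≤ Multiset.card P.roots := Multiset.toFinset_card_le _
      _ ≤ P.natDegree := P.card_roots' 
      _ = (minpoly F y).natDegree := Polynomial.natDegree_map _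
  have hdeg : (minpoly F y).natDegree = n := le_antisymm hd1 hd2
  have hrank : Module.finrank F (RatFunc k) = n := by
    rw [← IntermediateField.finrank_top', ← hFy, IntermediateField.adjoin.finrank hyInt, hdeg]
  -- primitive root in F
  have hζF : IsPrimitiveRoot (algebraMap k F ζ) n :=
    hζ.map_of_injective (algebraMap k F).injective
  have hK : (primitiveRoots (Module.finrank F (RatFunc k)) F).Nonempty := by
    rw [hrank]
    exact ⟨algebraMap k F ζ, (mem_primitiveRoots hn0).mpr hζF⟩
  have H : Irreducible (Polynomial.X ^ n - Polynomial.C w₀ : F[X]) := by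
    have := irreducible_X_pow_sub_C_of_root_adjoin_eq_top
      (a := w₀) (α := y) (by rw [hrank]; exact hα.symm) hFy
    rwa [hrank] at this
  haveI hsf : IsSplittingField F (RatFunc k) (Polynomial.X ^ n - Polynomial.C w₀) := by
    have := isSplittingField_X_pow_sub_C_of_root_adjoin_eq_top hK
      (a := w₀) (α := y) (by rw [hrank]; exact hα.symm) hFy
    rwa [hrank] at this
  haveI : NeZero n := ⟨hn0.ne'⟩
  constructor
  · exact isGalois_of_isSplittingField_X_pow_sub_C
      ⟨algebraMap k F ζ, (mem_primitiveRoots hn0).mpr hζF⟩ H (RatFunc k)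
  · exact ⟨autEquivZmod H (RatFunc k) hζF⟩
end

section
/- The intermediate field of k(X)/k generated by the two rational functions f₁ = X^{(q+1)/2}/(X^q − X) and f₂ = (X−1)/(X^q − X) is all of k(X), i.e., IntermediateField.adjoin k {f₁, f₂} = ⊤. (This expresses that the parametrization φ₁: (s:t) ↦ (s^{(q+1)/2}t^{(q−1)/2} : (s−t)t^{q−1} : s^q − st^{q−1}) of the curve C₁ is birational onto its image.) -/
open RatFunc

/-- The intermediate field of `k(X)/k` generated by `f₁ = X^((q+1)/2)/(X^q - X)` and
`f₂ = (X-1)/(X^q - X)` is all of `k(X)` (birationality of the parametrization `φ₁`). -/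
theorem stmt_6 (p e q : ℕ) (hp : p.Prime) (hp2 : p ≠ 2) (hq : q = p ^ e) (hq5 : 5 ≤ q)
    (k : Type*) [Field k] [IsAlgClosed k] [CharP k p]
    (f₁ f₂ : RatFunc k)
    (hf₁ : f₁ = RatFunc.X ^ ((q + 1) / 2) / (RatFunc.X ^ q - RatFunc.X))
    (hf₂ : f₂ = (RatFunc.X - 1) / (RatFunc.X ^ q - RatFunc.X)) :
    IntermediateField.adjoin k {f₁, f₂} = ⊤ := by
  haveI : Fact p.Prime := ⟨hp⟩
  haveI : CharP (RatFunc k) p :=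
    charP_of_injective_algebraMap (algebraMap k (RatFunc k)).injective p
  -- Frobenius facts
  have frob_add : ∀ a b : RatFunc k, (a + b) ^ q = a ^ q + b ^ q := by
    subst hq; intro a b; exact add_pow_char_pow a b p e
  have frob_sub : ∀ a b : RatFunc k, (a - b) ^ q = a ^ q - b ^ q := by
    subst hq; intro a b; exact sub_pow_char_pow a b e
  -- q is odd
  have hqodd : Odd q := hq ▸ (hp.odd_of_ne_two hp2).pow
  have hm2 : (q + 1) / 2 * 2 = q + 1 := Nat.div_mul_cancel hqodd.add_one.two_dvd
  -- basic nonvanishing facts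
  have halg : Function.Injective (algebraMap (Polynomial k) (RatFunc k)) :=
    RatFunc.algebraMap_injective k
  have hY : (RatFunc.X : RatFunc k) - 1 ≠ 0 := by
    have : (RatFunc.X : RatFunc k) - 1
        = algebraMap (Polynomial k) (RatFunc k) (Polynomial.X - 1) := by
      rw [map_sub, RatFunc.algebraMap_X, map_one]
    rw [this, Ne, map_eq_zero_iff _ halg]
    intro h0
    have := congrArg (Polynomial.eval 0) h0
    simp at this
  have hpowne : ∀ n : ℕ, n ≠ 1 → (RatFunc.X : RatFunc k) ^ n - RatFunc.X ≠ 0 := by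
    intro n hn
    have : (RatFunc.X : RatFunc k) ^ n - RatFunc.X
        = algebraMap (Polynomial k) (RatFunc k) (Polynomial.X ^ n - Polynomial.X) := by
      rw [map_sub, map_pow, RatFunc.algebraMap_X]
    rw [this, Ne, map_eq_zero_iff _ halg]
    intro h0
    have := congrArg (fun r => Polynomial.coeff r n) h0
    simp [Polynomial.coeff_X_pow, Polynomial.coeff_X, sub_eq_zero] at this
    exact hn this.symm
  have hu : (RatFunc.X : RatFunc k) ^ q - RatFunc.X ≠ 0 := hpowne q (by omega)
  set Y : RatFunc k := RatFunc.X - 1 with hYdef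
  set u : RatFunc k := RatFunc.X ^ q - RatFunc.X with hudef
  -- X^q = Y^q + 1 and u = Y^q - Y
  have hXq : (RatFunc.X : RatFunc k) ^ q = Y ^ q + 1 := by
    rw [hYdef, frob_sub, one_pow]; ring
  have huY : u = Y ^ q - Y := by rw [hudef, hXq, hYdef]; ring
  have hf2ne : f₂ ≠ 0 := by rw [hf₂]; exact div_ne_zero hY hu
  have hf2inv : f₂⁻¹ = u / Y := by rw [hf₂, inv_div]
  -- the key auxiliary elements
  set h : RatFunc k := 1 + f₂⁻¹ with hhdef
  set g : RatFunc k := f₁ * f₂⁻¹ with hgdef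
  have idh : h * Y = Y ^ q := by
    rw [hhdef, hf2inv, add_mul, one_mul, div_mul_cancel₀ _ hY, huY]; ring
  have idg : g * Y = RatFunc.X ^ ((q + 1) / 2) := by
    rw [hgdef, hf₁, hf2inv]
    field_simp
  set A : RatFunc k := g ^ 2 - h with hAdef
  have idA : A * Y ^ 2 = Y ^ q + Y + 1 := by
    have e1 : A * Y ^ 2 = (g * Y) ^ 2 - h * Y * Y := by rw [hAdef]; ring
    rw [e1, idg, idh, ← pow_mul, hm2, pow_succ, hXq, hYdef]
    ring
  have idAq : A ^ q * (Y ^ q) ^ 2 = (Y ^ q) ^ q + Y ^ q + 1 := by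
    have := congrArg (· ^ q) idA
    simp only [mul_pow] at this
    rw [← pow_mul, mul_comm 2 q, pow_mul] at this
    rw [this]
    rw [frob_add, frob_add, one_pow]
  set E : RatFunc k := A ^ q * h ^ 2 with hEdef
  have idE : E * Y ^ 2 = (Y ^ q) ^ q + Y ^ q + 1 := by
    have e1 : E * Y ^ 2 * (Y ^ q) ^ 2 = A ^ q * (Y ^ q) ^ 2 * (h * Y) ^ 2 := by
      rw [hEdef]; ring
    rw [idAq, idh] at e1
    exact mul_right_cancel₀ (pow_ne_zero 2 (pow_ne_zero q hY)) e1
  set B : RatFunc k := h + 1 with hBdef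
  have idB : B * Y = Y ^ q + Y := by rw [hBdef, add_mul, one_mul, idh]
  have idBq : B ^ q * (Y ^ q) = (Y ^ q) ^ q + Y ^ q := by
    have := congrArg (· ^ q) idB
    simp only [mul_pow] at this
    rw [this, frob_add]
  set N : RatFunc k := A - E with hNdef
  have idN : N * Y ^ 2 = Y - (Y ^ q) ^ q := by
    rw [hNdef, sub_mul, idA, idE]; ring
  set D : RatFunc k := E * B - A * (B ^ q * h) with hDdef
  have idD : D * Y ^ 3 = Y - (Y ^ q) ^ q := by
    have e1 : D * Y ^ 3 * Y ^ q
        = (E * Y ^ 2) * (B * Y) * Y ^ q - (A * Y ^ 2) * (B ^ q * Y ^ q) * (h * Y) := by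
      rw [hDdef]; ring
    rw [idE, idB, idA, idBq, idh] at e1
    have e2 : ((Y ^ q) ^ q + Y ^ q + 1) * (Y ^ q + Y) * Y ^ q
        - (Y ^ q + Y + 1) * ((Y ^ q) ^ q + Y ^ q) * Y ^ q
        = (Y - (Y ^ q) ^ q) * Y ^ q := by ring
    rw [e2] at e1
    exact mul_right_cancel₀ (pow_ne_zero q hY) e1
  -- Y - (Y^q)^q ≠ 0
  have hYqq : Y - (Y ^ q) ^ q ≠ 0 := by
    have e1 : Y - (Y ^ q) ^ q = -(RatFunc.X ^ (q * q) - RatFunc.X) := by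
      rw [hYdef, frob_sub, frob_sub, one_pow, one_pow, ← pow_mul]
      ring
    rw [e1, neg_ne_zero]
    exact hpowne (q * q) (by nlinarith)
  have hD : D ≠ 0 := by
    intro h0
    rw [h0, zero_mul] at idD
    exact hYqq idD.symm
  -- N = D * Y, hence Y = N / D
  have hNDY : N = D * Y := by
    have e1 : N * Y ^ 2 = (D * Y) * Y ^ 2 := by
      rw [idN, ← idD]; ring
    exact mul_right_cancel₀ (pow_ne_zero 2 hY) e1
  have hXval : (RatFunc.X : RatFunc k) = 1 + N * D⁻¹ := by
    rw [hNDY, mul_comm D Y, mul_assoc, mul_inv_cancel₀ hD, mul_one, hYdef]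
    ring
  -- membership
  set F := IntermediateField.adjoin k {f₁, f₂} with hF
  have hf1F : f₁ ∈ F := IntermediateField.subset_adjoin k _ (by simp)
  have hf2F : f₂ ∈ F := IntermediateField.subset_adjoin k _ (by simp)
  have hhF : h ∈ F := add_mem (one_mem F) (inv_mem hf2F)
  have hgF : g ∈ F := mul_mem hf1F (inv_mem hf2F)
  have hAF : A ∈ F := sub_mem (pow_mem hgF 2) hhF
  have hEF : E ∈ F := mul_mem (pow_mem hAF q) (pow_mem hhF 2)
  have hBF : B ∈ F := add_mem hhF (one_mem F)
  have hNF : N ∈ F := sub_mem hAF hEF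
  have hDF : D ∈ F := sub_mem (mul_mem hEF hBF) (mul_mem hAF (mul_mem (pow_mem hBF q) hhF))
  have hXF : (RatFunc.X : RatFunc k) ∈ F := by
    rw [hXval]
    exact add_mem (one_mem F) (mul_mem hNF (inv_mem hDF))
  -- conclude
  rw [eq_top_iff]
  have hpoly : ∀ P : Polynomial k, algebraMap (Polynomial k) (RatFunc k) P ∈ F := by
    intro P
    induction P using Polynomial.induction_on' with
    | add P Q hP hQ => rw [map_add]; exact add_mem hP hQ
    | monomial n a =>
      rw [← Polynomial.C_mul_X_pow_eq_monomial, map_mul, map_pow, RatFunc.algebraMap_X,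
        RatFunc.algebraMap_C]
      exact mul_mem (F.algebraMap_mem a) (pow_mem hXF n)
  intro x _
  induction x using RatFunc.induction_on with
  | f P Q hQ => exact div_mem (hpoly P) (hpoly Q)
end

section
/- Let γ ∈ k satisfy γ^q = γ and γ ∉ {0, 1, −1}, and let f = X^{(q+1)/2} + γ·X^{−(q+1)/2} ∈ k(X). Then the field extension k(X) over the intermediate field k(f) generated by f over k is a Galois extension, and its Galois group is isomorphic to the dihedral group of order q+1 (DihedralGroup ((q+1)/2)). (This is the field-theoretic content of the statement that P₁ = (0:1:0) is an outer Galois point for the curve C₃ parametrized by (s:t) ↦ (s^{(q+1)/2}t^{(q+1)/2} : (s+t)^{q+1} : s^{q+1} + γt^{q+1}), with Galois group D_{q+1}.) -/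
open RatFunc

open Polynomial

noncomputable section RFAux

variable {k : Type*} [Field k]

theorem RFaux.algHom_ext {L : Type*} [Field L] [Algebra k L]
    {σ τ : RatFunc k →ₐ[k] L} (h : σ RatFunc.X = τ RatFunc.X) : σ = τ := by
  have key : σ.comp (IsScalarTower.toAlgHom k k[X] (RatFunc k))
      = τ.comp (IsScalarTower.toAlgHom k k[X] (RatFunc k)) := by
    apply Polynomial.algHom_ext
    simpa [RatFunc.algebraMap_X] using h
  ext x
  rw [← RatFunc.num_div_denom x, map_div₀, map_div₀]
  have h1 := DFunLike.congr_fun key x.num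
  have h2 := DFunLike.congr_fun key x.denom
  simp only [AlgHom.coe_comp, Function.comp_apply, IsScalarTower.coe_toAlgHom'] at h1 h2
  rw [h1, h2]

theorem RFaux.transcendental_X : Transcendental k (RatFunc.X : RatFunc k) := by
  rw [← RatFunc.algebraMap_X]
  exact (transcendental_algebraMap_iff (RatFunc.algebraMap_injective k)).2
    (Polynomial.transcendental_X k)

theorem RFaux.transcendental_X_inv : Transcendental k ((RatFunc.X : RatFunc k))⁻¹ := by
  intro h
  exact RFaux.transcendental_X (by simpa using h.inv)

theorem RFaux.transcendental_C_mul {a : k} (ha : a ≠ 0) {t : RatFunc k}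
    (ht : Transcendental k t) : Transcendental k (RatFunc.C a * t) := by
  intro h
  apply ht
  have hA : IsIntegral k (RatFunc.C a⁻¹) := by
    rw [← RatFunc.algebraMap_eq_C]; exact isIntegral_algebraMap
  have h2 : IsAlgebraic k (RatFunc.C a⁻¹ * (RatFunc.C a * t)) :=
    (hA.mul (isAlgebraic_iff_isIntegral.mp h)).isAlgebraic
  rwa [← mul_assoc, ← map_mul, inv_mul_cancel₀ ha, map_one, one_mul] at h2

/-- The endomorphism of `RatFunc k` sending `X` to a transcendental element `g`. -/
def RFaux.endo (g : RatFunc k) (hg : Transcendental k g) :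
    RatFunc k →ₐ[k] RatFunc k :=
  RatFunc.liftAlgHom (Polynomial.aeval g) (by
    intro p hp
    simp only [Submonoid.mem_comap]
    refine mem_nonZeroDivisors_of_ne_zero (fun h0 => nonZeroDivisors.ne_zero hp ?_)
    exact transcendental_iff_injective.mp hg (by simpa using h0))

@[simp] theorem RFaux.endo_algebraMap (g : RatFunc k) (hg : Transcendental k g) (p : k[X]) :
    RFaux.endo g hg (algebraMap k[X] (RatFunc k) p) = Polynomial.aeval g p := by
  have := RatFunc.liftAlgHom_apply_div (φ := Polynomial.aeval g)
    (hφ := by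
      intro q hq
      simp only [Submonoid.mem_comap]
      refine mem_nonZeroDivisors_of_ne_zero (fun h0 => nonZeroDivisors.ne_zero hq ?_)
      exact transcendental_iff_injective.mp hg (by simpa using h0)) p 1
  simpa [RFaux.endo] using this

@[simp] theorem RFaux.endo_X (g : RatFunc k) (hg : Transcendental k g) :
    RFaux.endo g hg RatFunc.X = g := by
  have := RFaux.endo_algebraMap g hg Polynomial.X
  simpa [RatFunc.algebraMap_X] using this



noncomputable section
/-- `X ↦ a * X`. -/
def RFaux.autMul (a : k) (ha : a ≠ 0) : RatFunc k ≃ₐ[k] RatFunc k :=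
  AlgEquiv.ofAlgHom
    (RFaux.endo (RatFunc.C a * RatFunc.X) (RFaux.transcendental_C_mul ha RFaux.transcendental_X))
    (RFaux.endo (RatFunc.C a⁻¹ * RatFunc.X)
      (RFaux.transcendental_C_mul (inv_ne_zero ha) RFaux.transcendental_X))
    (RFaux.algHom_ext (by
      simp only [AlgHom.coe_comp, Function.comp_apply, RFaux.endo_X, AlgHom.coe_id, id_eq,
        map_mul, ← RatFunc.algebraMap_eq_C, AlgHom.commutes]
      rw [← mul_assoc, ← map_mul, inv_mul_cancel₀ ha, map_one, one_mul]))
    (RFaux.algHom_ext (by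
      simp only [AlgHom.coe_comp, Function.comp_apply, RFaux.endo_X, AlgHom.coe_id, id_eq,
        map_mul, ← RatFunc.algebraMap_eq_C, AlgHom.commutes]
      rw [← mul_assoc, ← map_mul, mul_inv_cancel₀ ha, map_one, one_mul]))

@[simp] theorem RFaux.autMul_X (a : k) (ha : a ≠ 0) :
    RFaux.autMul a ha RatFunc.X = RatFunc.C a * RatFunc.X :=
  RFaux.endo_X _ (RFaux.transcendental_C_mul ha RFaux.transcendental_X)

@[simp] theorem RFaux.autMul_C (a : k) (ha : a ≠ 0) (b : k) :
    RFaux.autMul a ha (RatFunc.C b) = RatFunc.C b := by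
  rw [← RatFunc.algebraMap_eq_C]; exact AlgEquiv.commutes _ _

/-- `X ↦ a / X`. -/
def RFaux.autInv (a : k) (ha : a ≠ 0) : RatFunc k ≃ₐ[k] RatFunc k :=
  AlgEquiv.ofAlgHom
    (RFaux.endo (RatFunc.C a * (RatFunc.X)⁻¹)
      (RFaux.transcendental_C_mul ha RFaux.transcendental_X_inv))
    (RFaux.endo (RatFunc.C a * (RatFunc.X)⁻¹)
      (RFaux.transcendental_C_mul ha RFaux.transcendental_X_inv))
    (RFaux.algHom_ext (by
      simp only [AlgHom.coe_comp, Function.comp_apply, RFaux.endo_X, AlgHom.coe_id, id_eq,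
        map_mul, map_inv₀, ← RatFunc.algebraMap_eq_C, AlgHom.commutes, RFaux.endo_X]
      have hC : RatFunc.C a ≠ 0 := by
        rw [← RatFunc.algebraMap_eq_C, ← map_zero (algebraMap k (RatFunc k))]
        exact (algebraMap k (RatFunc k)).injective.ne ha
      field_simp
      exact mul_div_cancel_left₀ _ (by rwa [RatFunc.algebraMap_eq_C])))
    (RFaux.algHom_ext (by
      simp only [AlgHom.coe_comp, Function.comp_apply, RFaux.endo_X, AlgHom.coe_id, id_eq,
        map_mul, map_inv₀, ← RatFunc.algebraMap_eq_C, AlgHom.commutes, RFaux.endo_X]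
      have hC : RatFunc.C a ≠ 0 := by
        rw [← RatFunc.algebraMap_eq_C, ← map_zero (algebraMap k (RatFunc k))]
        exact (algebraMap k (RatFunc k)).injective.ne ha
      field_simp
      exact mul_div_cancel_left₀ _ (by rwa [RatFunc.algebraMap_eq_C])))

@[simp] theorem RFaux.autInv_X (a : k) (ha : a ≠ 0) :
    RFaux.autInv a ha RatFunc.X = RatFunc.C a * (RatFunc.X)⁻¹ :=
  RFaux.endo_X _ (RFaux.transcendental_C_mul ha RFaux.transcendental_X_inv)

@[simp] theorem RFaux.autInv_C (a : k) (ha : a ≠ 0) (b : k) :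
    RFaux.autInv a ha (RatFunc.C b) = RatFunc.C b := by
  rw [← RatFunc.algebraMap_eq_C]; exact AlgEquiv.commutes _ _

attribute [irreducible] RFaux.endo RFaux.autMul RFaux.autInv
end


end RFAux


set_option maxHeartbeats 2000000 in
/-- For `γ ∈ 𝔽_q \ {0, ±1}` and `f = X^((q+1)/2) + γ·X^(-(q+1)/2) ∈ k(X)`, the extension
`k(X)/k(f)` is Galois with Galois group isomorphic to the dihedral group of order `q + 1`. -/
theorem stmt_8 (p e q : ℕ) (hp : p.Prime) (hp2 : p ≠ 2) (hq : q = p ^ e) (hq5 : 5 ≤ q)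
    (k : Type*) [Field k] [IsAlgClosed k] [CharP k p]
    (γ : k) (hγq : γ ^ q = γ) (hγ0 : γ ≠ 0) (hγ1 : γ ≠ 1) (hγm1 : γ ≠ -1)
    (f : RatFunc k)
    (hf : f = RatFunc.X ^ ((q + 1) / 2) + RatFunc.C γ * (RatFunc.X ^ ((q + 1) / 2))⁻¹) :
    IsGalois (IntermediateField.adjoin k {f}) (RatFunc k) ∧
      Nonempty ((RatFunc k ≃ₐ[IntermediateField.adjoin k {f}] RatFunc k) ≃*
        DihedralGroup ((q + 1) / 2)) := by
  classical
  set n : ℕ := (q + 1) / 2 with hn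
  have hqodd : Odd q := by rw [hq]; exact (hp.odd_of_ne_two hp2).pow
  have h2n : 2 * n = q + 1 := by obtain ⟨m, hm⟩ := hqodd; omega
  have hn3 : 3 ≤ n := by omega
  haveI : NeZero n := ⟨by omega⟩
  have hnk : (n : k) ≠ 0 := by
    rw [Ne, CharP.cast_eq_zero_iff k p]
    intro hd
    have he : e ≠ 0 := by rintro rfl; rw [pow_zero] at hq; omega
    have h1 : p ∣ q := hq ▸ dvd_pow_self p he
    have h2 : p ∣ q + 1 := h2n ▸ hd.mul_left 2
    have h3 := (Nat.dvd_sub h2 h1)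
    rw [Nat.add_sub_cancel_left] at h3
    have h4 := Nat.dvd_one.mp h3
    have := hp.two_le
    omega
  haveI : NeZero ((n : k)) := ⟨hnk⟩
  obtain ⟨ζ, hζ⟩ := HasEnoughRootsOfUnity.exists_primitiveRoot k n
  have hζn : ζ ^ n = 1 := hζ.pow_eq_one
  have hζ0 : ζ ≠ 0 := hζ.ne_zero (by omega)
  obtain ⟨c, hc⟩ := IsAlgClosed.exists_pow_nat_eq γ (n := n) (by omega)
  have hc0 : c ≠ 0 := fun h => hγ0 (by rw [← hc, h, zero_pow (by omega)])
  -- the `n`-th roots of unity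
  set u : ZMod n → k := fun i => ζ ^ i.val with hu
  have humod : ∀ m : ℕ, ζ ^ (m % n) = ζ ^ m := by
    intro m
    conv_rhs => rw [← Nat.div_add_mod m n]
    rw [pow_add, pow_mul, hζn, one_pow, one_mul]
  have hu_add : ∀ i j, u (i + j) = u i * u j := by
    intro i j
    rw [hu]
    simp only
    rw [ZMod.val_add, humod, pow_add]
  have hu_pow : ∀ i, (u i) ^ n = 1 := by
    intro i
    rw [hu]
    simp only
    rw [← pow_mul, mul_comm i.val n, pow_mul, hζn, one_pow]
  have hu0 : ∀ i, u i ≠ 0 := fun i => pow_ne_zero _ hζ0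
  have hu1 : u 0 = 1 := by rw [hu]; simp
  have hu_inj : Function.Injective u := by
    intro i j hij
    exact ZMod.val_injective n (hζ.pow_inj (ZMod.val_lt i) (ZMod.val_lt j) hij)
  -- basic facts
  have hx0 : (RatFunc.X : RatFunc k) ≠ 0 := RatFunc.X_ne_zero
  have hxn0 : (RatFunc.X : RatFunc k) ^ n ≠ 0 := pow_ne_zero _ hx0
  have hCinj : Function.Injective (RatFunc.C : k →+* RatFunc k) := by
    rw [← RatFunc.algebraMap_eq_C]; exact (algebraMap k (RatFunc k)).injective
  have hCne : ∀ {a : k}, a ≠ 0 → RatFunc.C a ≠ 0 := by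
    intro a ha h0
    exact ha (hCinj (by simpa using h0))
  -- the roots
  set ρ : ZMod n × Bool → RatFunc k := fun ib =>
    if ib.2 then RatFunc.C (c * u ib.1) * RatFunc.X⁻¹ else RatFunc.C (u ib.1) * RatFunc.X
    with hρ
  have hx2 : ∀ a b : k, a ≠ 0 → RatFunc.C a * RatFunc.X ≠ RatFunc.C b * RatFunc.X⁻¹ := by
    intro a b ha hab
    have h2 : RatFunc.X ^ 2 = RatFunc.C (a⁻¹ * b) := by
      field_simp at hab
      rw [map_mul, ← hab, ← mul_assoc, ← map_mul, inv_mul_cancel₀ ha,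
        map_one, one_mul, sq]
    rw [← RatFunc.algebraMap_X, ← map_pow, ← RatFunc.algebraMap_C (K := k),
      (RatFunc.algebraMap_injective k).eq_iff] at h2
    have := congrArg (fun r => Polynomial.coeff r 2) h2
    simp at this
  have hρ_inj : Function.Injective ρ := by
    rintro ⟨i, bi⟩ ⟨j, bj⟩ hij
    rw [hρ] at hij
    simp only at hij
    cases bi <;> cases bj <;> simp only [if_true, if_false, Bool.false_eq_true] at hij
    · have := mul_right_cancel₀ hx0 hij
      rw [hu_inj (hCinj this)]
    · exact absurd hij (hx2 _ _ (hu0 i))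
    · exact absurd hij.symm (hx2 _ _ (hu0 j))
    · have := mul_right_cancel₀ (inv_ne_zero hx0) hij
      have := hCinj this
      have : u i = u j := mul_left_cancel₀ hc0 this
      rw [hu_inj this]
  set S : Finset (RatFunc k) := Finset.image ρ Finset.univ with hS
  have hScard : S.card = 2 * n := by
    rw [hS, Finset.card_image_of_injective _ hρ_inj]
    simp [ZMod.card, mul_comm]
  -- the polynomial over RatFunc k
  set Q : Polynomial (RatFunc k) :=
    Polynomial.X ^ (2 * n) - Polynomial.C f * Polynomial.X ^ n + Polynomial.C (RatFunc.C γ)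
    with hQ
  have hQ' : Q = Polynomial.X ^ (2*n)
      + (Polynomial.C (RatFunc.C γ) - Polynomial.C f * Polynomial.X ^ n) := by
    rw [hQ]; ring
  have hRdeg : (Polynomial.C (RatFunc.C γ) - Polynomial.C f * Polynomial.X ^ n).degree
      < ((2*n : ℕ) : WithBot ℕ) := by
    refine lt_of_le_of_lt (Polynomial.degree_sub_le _ _) (max_lt ?_ ?_)
    · exact lt_of_le_of_lt Polynomial.degree_C_le (by exact_mod_cast (by omega : 0 < 2*n))
    · exact lt_of_le_of_lt (Polynomial.degree_C_mul_X_pow_le _ _)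
        (by exact_mod_cast (by omega : n < 2*n))
  have hQmonic : Q.Monic := by
    rw [hQ']; exact Polynomial.monic_X_pow_add hRdeg
  have hQdeg : Q.degree = ((2*n : ℕ) : WithBot ℕ) := by
    rw [hQ', Polynomial.degree_add_eq_left_of_degree_lt, Polynomial.degree_X_pow]
    rwa [Polynomial.degree_X_pow]
  have hQnatdeg : Q.natDegree = 2*n := Polynomial.natDegree_eq_of_degree_eq_some hQdeg
  have hQroot : ∀ r ∈ S, Q.IsRoot r := by
    intro r hr
    obtain ⟨⟨i, b⟩, _, rfl⟩ := Finset.mem_image.mp hr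
    unfold Polynomial.IsRoot
    rw [hρ, hQ]
    cases b <;>
      simp only [if_true, if_false, Bool.false_eq_true, Polynomial.eval_add,
        Polynomial.eval_sub, Polynomial.eval_pow, Polynomial.eval_mul, Polynomial.eval_C,
        Polynomial.eval_X]
    · have h1 : (RatFunc.C (u i) * RatFunc.X) ^ n = RatFunc.X ^ n := by
        rw [mul_pow, ← map_pow, hu_pow, map_one, one_mul]
      rw [show 2*n = n*2 by ring, pow_mul, h1, hf]
      field_simp
      ring
    · have h1 : (RatFunc.C (c * u i) * RatFunc.X⁻¹) ^ n
          = RatFunc.C γ * (RatFunc.X ^ n)⁻¹ := by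
        rw [mul_pow, ← map_pow, mul_pow, hu_pow, mul_one, hc, inv_pow]
      rw [show 2*n = n*2 by ring, pow_mul, h1, hf]
      field_simp
      ring
  have hQne : Q ≠ 0 := hQmonic.ne_zero
  have hprodmonic : (∏ r ∈ S, (Polynomial.X - Polynomial.C r)).Monic :=
    Polynomial.monic_prod_of_monic _ _ (fun _ _ => Polynomial.monic_X_sub_C _)
  have hproddeg : (∏ r ∈ S, (Polynomial.X - Polynomial.C r)).natDegree = 2*n := by
    rw [Polynomial.natDegree_prod _ _ (fun r _ => Polynomial.X_sub_C_ne_zero r)]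
    simp [Polynomial.natDegree_X_sub_C, hScard]
  have hsub : S.val ≤ Q.roots := by
    rw [Multiset.le_iff_subset S.nodup]
    intro r hr
    exact (Polynomial.mem_roots hQne).mpr (hQroot r hr)
  have hdvd : (∏ r ∈ S, (Polynomial.X - Polynomial.C r)) ∣ Q := by
    refine dvd_trans ?_ (Polynomial.prod_multiset_X_sub_C_dvd Q)
    rw [Finset.prod_eq_multiset_prod]
    exact Multiset.prod_dvd_prod_of_le (Multiset.map_le_map hsub)
  have hQfact : Q = ∏ r ∈ S, (Polynomial.X - Polynomial.C r) :=
    Polynomial.eq_of_monic_of_dvd_of_natDegree_le hprodmonic hQmonic hdvd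
      (by rw [hproddeg, hQnatdeg])
  -- the polynomial over the base field F = k(f)
  set F := IntermediateField.adjoin k {f} with hF
  have hfF : f ∈ F := IntermediateField.mem_adjoin_simple_self k f
  set P : Polynomial F :=
    Polynomial.X ^ (2*n) - Polynomial.C ⟨f, hfF⟩ * Polynomial.X ^ n
      + Polynomial.C (algebraMap k F γ) with hP
  have halgk : ∀ a : k, algebraMap F (RatFunc k) (algebraMap k F a) = RatFunc.C a := by
    intro a
    rw [← IsScalarTower.algebraMap_apply, RatFunc.algebraMap_eq_C]
  have hPmap : P.map (algebraMap F (RatFunc k)) = Q := by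
    rw [hP, hQ]
    simp only [Polynomial.map_add, Polynomial.map_sub, Polynomial.map_mul, Polynomial.map_pow,
      Polynomial.map_X, Polynomial.map_C, halgk]
    rw [show ((algebraMap F (RatFunc k)) ⟨f, hfF⟩) = f from rfl]
  have hPmonic : P.Monic := by
    have hinj : Function.Injective (algebraMap F (RatFunc k)) :=
      (algebraMap F (RatFunc k)).injective
    exact Polynomial.monic_of_injective hinj (hPmap ▸ hQmonic)
  have hQsep : Q.Separable := by
    rw [hQfact]
    exact Polynomial.separable_prod_X_sub_C_iff'.mpr (fun a _ b _ h => h)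
  have hPsep : P.Separable :=
    (Polynomial.separable_map (algebraMap F (RatFunc k))).mp (hPmap ▸ hQsep)
  have hQsplits : Q.Splits := by
    rw [hQfact]
    exact Polynomial.Splits.prod (fun r _ => Polynomial.Splits.X_sub_C _)
  have hPsplits : (P.map (algebraMap F (RatFunc k))).Splits := by
    rw [hPmap]
    exact hQsplits
  have hXS : (RatFunc.X : RatFunc k) ∈ S := by
    refine Finset.mem_image.mpr ⟨(0, false), Finset.mem_univ _, ?_⟩
    rw [hρ]
    simp [hu1]
  have haevalX : Polynomial.aeval (RatFunc.X : RatFunc k) P = 0 := by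
    rw [Polynomial.aeval_def, Polynomial.eval₂_eq_eval_map, hPmap]
    exact hQroot _ hXS
  have hXint : IsIntegral F (RatFunc.X : RatFunc k) :=
    ⟨P, hPmonic, by rw [← Polynomial.aeval_def]; exact haevalX⟩
  have hadjX : IntermediateField.adjoin F {(RatFunc.X : RatFunc k)} = ⊤ := by
    rw [eq_top_iff]
    intro y _
    have hpoly : ∀ pp : k[X], algebraMap k[X] (RatFunc k) pp ∈
        IntermediateField.adjoin F {(RatFunc.X : RatFunc k)} := by
      intro pp
      induction pp using Polynomial.induction_on' with
      | add p1 q1 hp1 hq1 => rw [map_add]; exact add_mem hp1 hq1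
      | monomial m a =>
        rw [← Polynomial.C_mul_X_pow_eq_monomial, map_mul, map_pow, RatFunc.algebraMap_C,
          RatFunc.algebraMap_X]
        refine mul_mem ?_ (pow_mem (IntermediateField.mem_adjoin_simple_self F _) m)
        have haF : RatFunc.C a ∈ F := by
          rw [← RatFunc.algebraMap_eq_C]; exact F.algebraMap_mem a
        exact (IntermediateField.adjoin F {(RatFunc.X : RatFunc k)}).algebraMap_mem
          (⟨RatFunc.C a, haF⟩ : F)
    rw [← RatFunc.num_div_denom y]
    exact div_mem (hpoly _) (hpoly _)
  haveI hsf : P.IsSplittingField F (RatFunc k) := by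
    constructor
    · exact hPsplits
    · have hXroot : (RatFunc.X : RatFunc k) ∈ P.rootSet (RatFunc k) := by
        rw [Polynomial.mem_rootSet]
        exact ⟨hPmonic.ne_zero, haevalX⟩
      have h2 : (Algebra.adjoin F {(RatFunc.X : RatFunc k)}) = ⊤ := by
        rw [← IntermediateField.adjoin_simple_toSubalgebra_of_isAlgebraic hXint.isAlgebraic, hadjX]
        exact IntermediateField.top_toSubalgebra
      have h3 := Algebra.adjoin_mono (R := F) (Set.singleton_subset_iff.mpr hXroot)
      rw [h2] at h3
      exact top_le_iff.mp h3
  have hgal : IsGalois F (RatFunc k) := IsGalois.of_separable_splitting_field hPsep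
  refine ⟨hgal, ?_⟩
  -- the k-automorphisms
  let autK : ZMod n → Bool → (RatFunc k ≃ₐ[k] RatFunc k) := fun i b =>
    if b then RFaux.autInv (c * u i) (mul_ne_zero hc0 (hu0 i)) else RFaux.autMul (u i) (hu0 i)
  have hautK_X_mul : ∀ i, autK i false RatFunc.X = RatFunc.C (u i) * RatFunc.X := by
    intro i; simp [autK]
  have hautK_X_inv : ∀ i, autK i true RatFunc.X = RatFunc.C (c * u i) * RatFunc.X⁻¹ := by
    intro i; simp [autK]
  have hautK_C : ∀ i b a, autK i b (RatFunc.C a) = RatFunc.C a := by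
    intro i b a; cases b <;> simp [autK]
  have hpow_mul : ∀ i : ZMod n, (RatFunc.C (u i) * RatFunc.X) ^ n = RatFunc.X ^ n := by
    intro i; rw [mul_pow, ← map_pow, hu_pow, map_one, one_mul]
  have hpow_inv : ∀ i : ZMod n, (RatFunc.C (c * u i) * RatFunc.X⁻¹) ^ n
      = RatFunc.C γ * (RatFunc.X ^ n)⁻¹ := by
    intro i; rw [mul_pow, ← map_pow, mul_pow, hu_pow, mul_one, hc, inv_pow]
  have hautK_f : ∀ i b, autK i b f = f := by
    intro i b
    conv_lhs => rw [hf]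
    rw [hf]
    cases b
    · rw [map_add, map_mul, map_inv₀, map_pow, hautK_X_mul, hautK_C, hpow_mul]
    · rw [map_add, map_mul, map_inv₀, map_pow, hautK_X_inv, hautK_C, hpow_inv]
      field_simp [hCne hγ0]
      ring
  have hfixF : ∀ i b (y : RatFunc k), y ∈ F → autK i b y = y := by
    intro i b
    let T : IntermediateField k (RatFunc k) :=
      { AlgHom.equalizer ((autK i b) : RatFunc k →ₐ[k] RatFunc k) (AlgHom.id k (RatFunc k)) with
        inv_mem' := fun y hy => by
          have hy' : autK i b y = y := hy
          show autK i b y⁻¹ = y⁻¹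
          rw [map_inv₀, hy'] }
    have hle : F ≤ T := by
      rw [hF]
      refine IntermediateField.adjoin_le_iff.mpr ?_
      intro y hy
      rw [Set.mem_singleton_iff.mp hy]
      exact hautK_f i b
    intro y hy
    exact hle hy
  -- the F-automorphisms
  let autF : ZMod n → Bool → (RatFunc k ≃ₐ[F] RatFunc k) := fun i b =>
    AlgEquiv.ofRingEquiv (f := (autK i b).toRingEquiv) (fun z => hfixF i b z.1 z.2)
  have hautF_coe : ∀ i b (y : RatFunc k), autF i b y = autK i b y := fun i b y => rfl
  have hX_mul : ∀ i, autF i false RatFunc.X = RatFunc.C (u i) * RatFunc.X := by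
    intro i; rw [hautF_coe, hautK_X_mul]
  have hX_inv : ∀ i, autF i true RatFunc.X = RatFunc.C (c * u i) * RatFunc.X⁻¹ := by
    intro i; rw [hautF_coe, hautK_X_inv]
  have hautF_X : ∀ i b, autF i b RatFunc.X = ρ (i, b) := by
    intro i b
    cases b
    · rw [hX_mul, hρ]
      simp
    · rw [hX_inv, hρ]
      simp
  have hautF_C : ∀ i b a, autF i b (RatFunc.C a) = RatFunc.C a := by
    intro i b a; rw [hautF_coe, hautK_C]
  have extF : ∀ σ τ : RatFunc k ≃ₐ[F] RatFunc k, σ RatFunc.X = τ RatFunc.X → σ = τ := by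
    intro σ τ h
    have h2 : (σ.toAlgHom.restrictScalars k) = (τ.toAlgHom.restrictScalars k) :=
      RFaux.algHom_ext h
    ext y
    exact DFunLike.congr_fun h2 y
  -- the dihedral homomorphism
  let Φf : DihedralGroup n → (RatFunc k ≃ₐ[F] RatFunc k) := fun d =>
    match d with
    | DihedralGroup.r i => autF i false
    | DihedralGroup.sr i => autF i true
  have hΦr : ∀ i, Φf (DihedralGroup.r i) = autF i false := fun i => rfl
  have hΦsr : ∀ i, Φf (DihedralGroup.sr i) = autF i true := fun i => rfl
  have hmul : ∀ d1 d2, Φf (d1 * d2) = Φf d1 * Φf d2 := by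
    rintro (i | i) (j | j)
    · rw [DihedralGroup.r_mul_r, hΦr, hΦr, hΦr]
      refine extF _ _ ?_
      simp only [AlgEquiv.mul_apply, hX_mul, hX_inv, map_mul, map_inv₀, hautF_C, hu_add]
      ring
    · rw [DihedralGroup.r_mul_sr, hΦr, hΦsr, hΦsr]
      refine extF _ _ ?_
      have hui : u (j - i) * u i = u j := by rw [← hu_add, sub_add_cancel]
      simp only [AlgEquiv.mul_apply, hX_mul, hX_inv, map_mul, map_inv₀, hautF_C, ← hui]
      field_simp [hCne hc0, hCne (hu0 i), hCne (hu0 (j - i)), hx0]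
    · rw [DihedralGroup.sr_mul_r, hΦsr, hΦr, hΦsr]
      refine extF _ _ ?_
      simp only [AlgEquiv.mul_apply, hX_mul, hX_inv, map_mul, map_inv₀, hautF_C, hu_add]
      ring
    · rw [DihedralGroup.sr_mul_sr, hΦsr, hΦsr, hΦr]
      refine extF _ _ ?_
      have hui : u (j - i) * u i = u j := by rw [← hu_add, sub_add_cancel]
      simp only [AlgEquiv.mul_apply, hX_mul, hX_inv, map_mul, map_inv₀, hautF_C, ← hui]
      field_simp [hCne hc0, hCne (hu0 i), hCne (hu0 (j - i)), hx0]
  have hΦinj : Function.Injective (MonoidHom.mk' Φf hmul) := by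
    intro d1 d2 h
    have h' : Φf d1 = Φf d2 := h
    cases d1 with
    | r i =>
      cases d2 with
      | r j =>
        have hXX : ρ (i, false) = ρ (j, false) := by
          rw [← hautF_X, ← hautF_X, ← hΦr, ← hΦr, h']
        exact congrArg DihedralGroup.r (Prod.ext_iff.mp (hρ_inj hXX)).1
      | sr j =>
        have hXX : ρ (i, false) = ρ (j, true) := by
          rw [← hautF_X, ← hautF_X, ← hΦr, ← hΦsr, h']
        exact absurd (Prod.ext_iff.mp (hρ_inj hXX)).2 (by simp)
    | sr i =>
      cases d2 with
      | r j =>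
        have hXX : ρ (i, true) = ρ (j, false) := by
          rw [← hautF_X, ← hautF_X, ← hΦsr, ← hΦr, h']
        exact absurd (Prod.ext_iff.mp (hρ_inj hXX)).2 (by simp)
      | sr j =>
        have hXX : ρ (i, true) = ρ (j, true) := by
          rw [← hautF_X, ← hautF_X, ← hΦsr, ← hΦsr, h']
        exact congrArg DihedralGroup.sr (Prod.ext_iff.mp (hρ_inj hXX)).1
  have hΦsurj : Function.Surjective ⇑(MonoidHom.mk' Φf hmul) := by
    intro σ
    have hroot : Q.eval (σ RatFunc.X) = 0 := by
      have h1 : Polynomial.aeval (σ RatFunc.X) P = 0 := by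
        rw [Polynomial.aeval_algHom_apply σ RatFunc.X P, haevalX, map_zero]
      rwa [Polynomial.aeval_def, Polynomial.eval₂_eq_eval_map, hPmap] at h1
    have hmem : σ RatFunc.X ∈ S := by
      rw [hQfact, Polynomial.eval_prod] at hroot
      obtain ⟨r, hrS, hr⟩ := Finset.prod_eq_zero_iff.mp hroot
      rw [Polynomial.eval_sub, Polynomial.eval_X, Polynomial.eval_C, sub_eq_zero] at hr
      exact hr ▸ hrS
    obtain ⟨⟨i, b⟩, _, hib⟩ := Finset.mem_image.mp hmem
    cases b
    · refine ⟨DihedralGroup.r i, extF _ _ ?_⟩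
      show Φf (DihedralGroup.r i) RatFunc.X = σ RatFunc.X
      rw [hΦr, hautF_X, hib]
    · refine ⟨DihedralGroup.sr i, extF _ _ ?_⟩
      show Φf (DihedralGroup.sr i) RatFunc.X = σ RatFunc.X
      rw [hΦsr, hautF_X, hib]
  exact ⟨(MulEquiv.ofBijective (MonoidHom.mk' Φf hmul) ⟨hΦinj, hΦsurj⟩).symm⟩
end

section
/- Let n = (q+1)/2, let ζ ∈ k be a primitive n-th root of unity, and let δ ∈ k be nonzero. Then the subgroup of PGL(2,k) generated by the classes of the matrices [[ζ,0],[0,1]] and [[0,1],[δ,0]] is isomorphic to the dihedral group of order q+1 (DihedralGroup ((q+1)/2)). -/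
open Matrix

section helpers
variable {k : Type*} [Field k]

lemma GL2_scalar_mem_center (c : k) (Z : GL (Fin 2) k)
    (h : (Z : Matrix (Fin 2) (Fin 2) k) = c • 1) :
    Z ∈ Subgroup.center (GL (Fin 2) k) := by
  rw [Subgroup.mem_center_iff]
  intro g
  apply Units.ext
  show (g : Matrix (Fin 2) (Fin 2) k) * Z = (Z : Matrix (Fin 2) (Fin 2) k) * g
  rw [h, Matrix.mul_smul, Matrix.smul_mul, mul_one, one_mul]

lemma GL2_center_is_scalar (Z : GL (Fin 2) k) (hZ : Z ∈ Subgroup.center (GL (Fin 2) k)) :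
    (Z : Matrix (Fin 2) (Fin 2) k) = ((Z : Matrix (Fin 2) (Fin 2) k) 0 0) • 1 := by
  rw [Subgroup.mem_center_iff] at hZ
  set U₁ : GL (Fin 2) k := Matrix.GeneralLinearGroup.mkOfDetNeZero !![1,1;0,1]
    (by simp [Matrix.det_fin_two_of]) with hU₁
  set U₂ : GL (Fin 2) k := Matrix.GeneralLinearGroup.mkOfDetNeZero !![1,0;1,1]
    (by simp [Matrix.det_fin_two_of]) with hU₂
  have h₁ : (U₁ : Matrix (Fin 2) (Fin 2) k) * Z = (Z : Matrix (Fin 2) (Fin 2) k) * U₁ := by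
    rw [← Units.val_mul, ← Units.val_mul, hZ U₁]
  have h₂ : (U₂ : Matrix (Fin 2) (Fin 2) k) * Z = (Z : Matrix (Fin 2) (Fin 2) k) * U₂ := by
    rw [← Units.val_mul, ← Units.val_mul, hZ U₂]
  have hu1 : (U₁ : Matrix (Fin 2) (Fin 2) k) = !![1,1;0,1] := rfl
  have hu2 : (U₂ : Matrix (Fin 2) (Fin 2) k) = !![1,0;1,1] := rfl
  set M : Matrix (Fin 2) (Fin 2) k := (Z : Matrix (Fin 2) (Fin 2) k) with hM
  rw [hu1, Matrix.eta_fin_two M, Matrix.mul_fin_two, Matrix.mul_fin_two] at h₁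
  rw [hu2, Matrix.eta_fin_two M, Matrix.mul_fin_two, Matrix.mul_fin_two] at h₂
  have e1 := congrFun (congrFun h₁ 0) 0
  have e2 := congrFun (congrFun h₁ 0) 1
  have e3 := congrFun (congrFun h₂ 0) 0
  simp at e1 e2 e3
  have hc : M 1 0 = 0 := e1
  have hb : M 0 1 = 0 := e3
  have hd : M 1 1 = M 0 0 := by rw [hb] at e2; simpa using e2
  show M = M 0 0 • 1
  ext i j
  fin_cases i <;> fin_cases j <;>
    simp [hb, hc, hd, Matrix.one_apply]

end helpers

/-- For `ζ` a primitive `(q+1)/2`-th root of unity and `δ ≠ 0`, the subgroup of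
`PGL(2,k)` generated by the classes of `[[ζ,0],[0,1]]` and `[[0,1],[δ,0]]` is
isomorphic to the dihedral group of order `q + 1`. -/
theorem stmt_10 (p e q : ℕ) (hp : p.Prime) (hp2 : p ≠ 2) (hq : q = p ^ e) (hq5 : 5 ≤ q)
    (k : Type*) [Field k] [IsAlgClosed k] [CharP k p]
    (ζ δ : k) (hζ : IsPrimitiveRoot ζ ((q + 1) / 2)) (hδ : δ ≠ 0)
    (σ τ : PGL2 k)
    (hσ : σ = QuotientGroup.mk (Matrix.GeneralLinearGroup.mkOfDetNeZero
      !![ζ, 0; 0, (1 : k)] (by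
        simp only [Matrix.det_fin_two_of]
        have := hζ.ne_zero (by omega)
        simp [this])))
    (hτ : τ = QuotientGroup.mk (Matrix.GeneralLinearGroup.mkOfDetNeZero
      !![(0 : k), 1; δ, 0] (by simp [Matrix.det_fin_two_of, hδ]))) :
    Nonempty (↥(Subgroup.closure {σ, τ}) ≃* DihedralGroup ((q + 1) / 2)) := by
  set n := (q + 1) / 2 with hn
  have hn3 : 3 ≤ n := by omega
  haveI : NeZero n := ⟨by omega⟩
  haveI : Fact (1 < n) := ⟨by omega⟩
  have hζ0 : ζ ≠ 0 := hζ.ne_zero (by omega)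
  have hdetA : Matrix.det !![ζ, 0; 0, (1:k)] ≠ 0 := by
    simp [Matrix.det_fin_two_of, hζ0]
  have hdetB : Matrix.det !![(0:k), 1; δ, 0] ≠ 0 := by
    simp [Matrix.det_fin_two_of, hδ]
  set A := Matrix.GeneralLinearGroup.mkOfDetNeZero !![ζ, 0; 0, (1:k)] hdetA with hA
  set B := Matrix.GeneralLinearGroup.mkOfDetNeZero !![(0:k), 1; δ, 0] hdetB with hB
  have hσA : σ = QuotientGroup.mk A := hσ
  have hτB : τ = QuotientGroup.mk B := hτ
  have hAv : (A : Matrix (Fin 2) (Fin 2) k) = !![ζ, 0; 0, 1] := rfl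
  have hBv : (B : Matrix (Fin 2) (Fin 2) k) = !![0, 1; δ, 0] := rfl
  have hApow : ∀ m : ℕ, ((A ^ m : GL (Fin 2) k) : Matrix (Fin 2) (Fin 2) k)
      = !![ζ ^ m, 0; 0, 1] := by
    intro m
    induction m with
    | zero => simp [Matrix.one_fin_two]
    | succ m ih =>
        rw [pow_succ, Units.val_mul, ih, hAv, Matrix.mul_fin_two]
        norm_num [pow_succ]
  have hσpow : ∀ m : ℕ, σ ^ m = QuotientGroup.mk (A ^ m) := by
    intro m
    rw [hσA]
    exact (map_pow (QuotientGroup.mk' (Subgroup.center (GL (Fin 2) k))) A m).symm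
  have hσ_eq_one : ∀ m : ℕ, (σ ^ m = 1 ↔ n ∣ m) := by
    intro m
    rw [hσpow m, QuotientGroup.eq_one_iff]
    constructor
    · intro h
      have h2 := GL2_center_is_scalar _ h
      rw [hApow m] at h2
      have h00 := congrFun (congrFun h2 0) 0
      have h11 := congrFun (congrFun h2 1) 1
      simp [Matrix.one_apply] at h00 h11
      exact (hζ.pow_eq_one_iff_dvd m).mp h11.symm
    · intro h
      apply GL2_scalar_mem_center 1 _
      rw [hApow m, (hζ.pow_eq_one_iff_dvd m).mpr h]
      ext i j
      fin_cases i <;> fin_cases j <;> simp [Matrix.one_apply]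
  have hordσ : orderOf σ = n :=
    Nat.dvd_antisymm (orderOf_dvd_of_pow_eq_one ((hσ_eq_one n).mpr dvd_rfl))
      ((hσ_eq_one (orderOf σ)).mp (pow_orderOf_eq_one σ))
  have hτ2 : τ * τ = 1 := by
    rw [hτB, ← QuotientGroup.mk_mul, QuotientGroup.eq_one_iff]
    apply GL2_scalar_mem_center δ
    rw [Units.val_mul, hBv, Matrix.mul_fin_two]
    ext i j
    fin_cases i <;> fin_cases j <;> simp [Matrix.one_apply]
  have hrel : τ * σ * τ * σ = 1 := by
    rw [hσA, hτB, ← QuotientGroup.mk_mul, ← QuotientGroup.mk_mul, ← QuotientGroup.mk_mul,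
      QuotientGroup.eq_one_iff]
    apply GL2_scalar_mem_center (δ * ζ)
    rw [Units.val_mul, Units.val_mul, Units.val_mul, hBv, hAv,
      Matrix.mul_fin_two, Matrix.mul_fin_two, Matrix.mul_fin_two]
    ext i j
    fin_cases i <;> fin_cases j <;> (simp [Matrix.one_apply]; try ring)
  have hmix : ∀ m : ℕ, τ * σ ^ m ≠ 1 := by
    intro m h
    rw [hτB, hσpow m, ← QuotientGroup.mk_mul, QuotientGroup.eq_one_iff] at h
    have h2 := GL2_center_is_scalar _ h
    rw [Units.val_mul, hBv, hApow m, Matrix.mul_fin_two] at h2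
    have h00 := congrFun (congrFun h2 0) 0
    have h01 := congrFun (congrFun h2 0) 1
    simp [Matrix.one_apply] at h00 h01
  have hst : σ * τ = τ * σ⁻¹ := by
    have h1 : τ * (σ * τ) = σ⁻¹ := by
      rw [← mul_assoc]; exact eq_inv_of_mul_eq_one_left hrel
    calc σ * τ = (τ * τ) * (σ * τ) := by rw [hτ2, one_mul]
    _ = τ * σ⁻¹ := by rw [mul_assoc, h1]
  have hcomm : ∀ m : ℕ, σ ^ m * τ = τ * (σ ^ m)⁻¹ := by
    intro m
    induction m with
    | zero => simp
    | succ m ih =>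
        rw [pow_succ, mul_assoc, hst, ← mul_assoc, ih]; group
  have hpow2 : ∀ i j : ZMod n, σ ^ i.val * σ ^ j.val = σ ^ ((i + j).val) := by
    intro i j
    rw [← pow_add, ZMod.val_add]
    conv_lhs => rw [← pow_mod_orderOf]
    rw [hordσ]
  let f : DihedralGroup n → PGL2 k := fun x => match x with
    | DihedralGroup.r i => σ ^ i.val
    | DihedralGroup.sr i => τ * σ ^ i.val
  have hf : ∀ x y, f (x * y) = f x * f y := by
    rintro (i | i) (j | j)
    · exact (hpow2 i j).symm
    · show τ * σ ^ ((j - i).val) = σ ^ i.val * (τ * σ ^ j.val)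
      have h := hpow2 i (j - i)
      rw [add_sub_cancel] at h
      symm
      calc σ ^ i.val * (τ * σ ^ j.val) = (σ ^ i.val * τ) * σ ^ j.val := by rw [mul_assoc]
      _ = τ * ((σ ^ i.val)⁻¹ * σ ^ j.val) := by rw [hcomm, mul_assoc]
      _ = τ * σ ^ ((j - i).val) := by
            rw [show (σ ^ i.val)⁻¹ * σ ^ j.val = σ ^ ((j - i).val) from
              inv_mul_eq_iff_eq_mul.mpr h.symm]
    · show τ * σ ^ ((i + j).val) = (τ * σ ^ i.val) * σ ^ j.val
      rw [mul_assoc, hpow2]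
    · show σ ^ ((j - i).val) = (τ * σ ^ i.val) * (τ * σ ^ j.val)
      have h := hpow2 i (j - i)
      rw [add_sub_cancel] at h
      symm
      calc (τ * σ ^ i.val) * (τ * σ ^ j.val)
          = τ * ((σ ^ i.val * τ) * σ ^ j.val) := by group
      _ = τ * (τ * ((σ ^ i.val)⁻¹ * σ ^ j.val)) := by rw [hcomm, mul_assoc]
      _ = (τ * τ) * ((σ ^ i.val)⁻¹ * σ ^ j.val) := by group
      _ = σ ^ ((j - i).val) := by
            rw [hτ2, one_mul, show (σ ^ i.val)⁻¹ * σ ^ j.val = σ ^ ((j - i).val) from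
              inv_mul_eq_iff_eq_mul.mpr h.symm]
  let φ : DihedralGroup n →* PGL2 k := MonoidHom.mk' f hf
  have hφr : ∀ i : ZMod n, φ (DihedralGroup.r i) = σ ^ i.val := fun _ => rfl
  have hφsr : ∀ i : ZMod n, φ (DihedralGroup.sr i) = τ * σ ^ i.val := fun _ => rfl
  have hinj : Function.Injective φ := by
    rw [injective_iff_map_eq_one]
    rintro (i | i) h
    · rw [hφr] at h
      have hdvd := (hσ_eq_one i.val).mp h
      have h0 : i = 0 :=
        (ZMod.val_eq_zero i).mp (Nat.eq_zero_of_dvd_of_lt hdvd (ZMod.val_lt i))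
      rw [h0]; rfl
    · rw [hφsr] at h
      exact absurd h (hmix i.val)
  have hrange : φ.range = Subgroup.closure {σ, τ} := by
    apply le_antisymm
    · rintro x ⟨(i | i), rfl⟩
      · exact Subgroup.pow_mem _ (Subgroup.subset_closure (Set.mem_insert _ _)) _
      · exact Subgroup.mul_mem _
          (Subgroup.subset_closure (Set.mem_insert_of_mem _ rfl))
          (Subgroup.pow_mem _ (Subgroup.subset_closure (Set.mem_insert _ _)) _)
    · rw [Subgroup.closure_le]
      rintro x hx
      simp only [Set.mem_insert_iff, Set.mem_singleton_iff] at hx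
      have h1 : σ ∈ φ.range := ⟨DihedralGroup.r 1, by rw [hφr, ZMod.val_one]; exact pow_one σ⟩
      have h2 : τ ∈ φ.range := ⟨DihedralGroup.sr 0, by rw [hφsr]; simp⟩
      rcases hx with rfl | rfl <;> assumption
  exact ⟨(MulEquiv.subgroupCongr hrange.symm).trans (MonoidHom.ofInjective hinj).symm⟩
end

section
/- Let γ ∈ k with γ ≠ 1, and let f = X^{(q+1)/2}/((X+1)^{q+1} − X^{q+1} − γ) ∈ k(X). Then the degree of the field extension k(X) over the intermediate field k(f) generated by f over k is exactly q. (This expresses that the projection of the curve C₃ from the point Q = φ₃(1:0) = (0:1:1) has degree q, and hence that the parametrization φ₃: (s:t) ↦ (s^{(q+1)/2}t^{(q+1)/2} : (s+t)^{q+1} : s^{q+1} + γt^{q+1}) is birational onto its image.) -/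
section AuxiliaryForStmt13

open Polynomial

variable {k : Type*} [CommSemiring k]

/-- The ring hom swapping the two variables of `k[X][Y]`. -/
noncomputable def polySwap : Polynomial (Polynomial k) →+* Polynomial (Polynomial k) :=
  eval₂RingHom (eval₂RingHom (C.comp C) X) (C X)

@[simp] lemma polySwap_CC (a : k) : polySwap (C (C a)) = C (C a) := by
  simp [polySwap]

@[simp] lemma polySwap_C_X : polySwap (C (X : Polynomial k)) = X := by
  simp [polySwap]

@[simp] lemma polySwap_X : polySwap (X : Polynomial (Polynomial k)) = C X := by
  simp [polySwap]

lemma polySwap_comp_polySwap :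
    (polySwap (k := k)).comp polySwap = RingHom.id _ := by
  apply Polynomial.ringHom_ext
  · intro a
    have : ((polySwap (k := k)).comp polySwap).comp C =
        (RingHom.id (Polynomial (Polynomial k))).comp C := by
      apply Polynomial.ringHom_ext <;> simp
    exact DFunLike.congr_fun this a
  · simp

/-- Swapping the variables of `k[X][Y]` as a ring equivalence. -/
noncomputable def polySwapEquiv : Polynomial (Polynomial k) ≃+* Polynomial (Polynomial k) :=
  RingEquiv.ofRingHom polySwap polySwap polySwap_comp_polySwap polySwap_comp_polySwap

lemma polySwap_C (a : Polynomial k) : polySwap (C a) = a.map C := by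
  induction a using Polynomial.induction_on' with
  | add p q hp hq => simp [map_add, hp, hq]
  | monomial i c => simp [← C_mul_X_pow_eq_monomial, map_mul, map_pow, Polynomial.map_mul,
      Polynomial.map_pow]

open IntermediateField in
theorem aux_finrank (k : Type*) [Field k] [IsAlgClosed k] (n d : Polynomial k)
    (hn : n ≠ 0) (hd : d.Monic) (hlt : n.natDegree < d.natDegree) (hcop : IsCoprime n d)
    (f : RatFunc k)
    (hf : f = algebraMap (Polynomial k) (RatFunc k) n / algebraMap (Polynomial k) (RatFunc k) d) :
    Module.finrank (IntermediateField.adjoin k {f}) (RatFunc k) = d.natDegree := by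
  letI := Classical.decEq k
  set φ₀ := algebraMap (Polynomial k) (RatFunc k) with hφ₀
  have hdne : φ₀ d ≠ 0 := by
    simpa using (map_ne_zero_iff φ₀ (RatFunc.algebraMap_injective k)).mpr hd.ne_zero
  have hnne : φ₀ n ≠ 0 := by
    simpa using (map_ne_zero_iff φ₀ (RatFunc.algebraMap_injective k)).mpr hn
  have hfne : f ≠ 0 := by rw [hf]; exact div_ne_zero hnne hdne
  have hfd : f * φ₀ d = φ₀ n := by rw [hf]; field_simp
  have hDpos : 0 < d.natDegree := lt_of_le_of_lt (Nat.zero_le _) hlt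
  -- `f` is transcendental over `k`
  have htrans : Transcendental k f := by
    intro halg
    have hint : IsIntegral k f := halg.isIntegral
    have hirr := minpoly.irreducible hint
    have hdeg1 : (minpoly k f).degree = 1 :=
      (IsAlgClosed.splits _).degree_eq_one_of_irreducible hirr
    have hμ := Polynomial.eq_X_add_C_of_degree_eq_one hdeg1
    rw [(minpoly.monic hint).leadingCoeff, C_1, one_mul] at hμ
    have h0 := minpoly.aeval k f
    rw [hμ] at h0
    simp only [map_add, aeval_X, aeval_C] at h0
    have hfc : f = algebraMap k (RatFunc k) (-(minpoly k f).coeff 0) := by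
      rw [map_neg]; linear_combination h0
    -- then `C c * d = n` in `k[X]`, contradiction on degrees
    set c := -(minpoly k f).coeff 0 with hc
    have : φ₀ (Polynomial.C c * d) = φ₀ n := by
      rw [map_mul, RatFunc.algebraMap_C, ← RatFunc.algebraMap_eq_C, ← hfc, hfd]
    have hcd : Polynomial.C c * d = n := RatFunc.algebraMap_injective k this
    have := congrArg (fun p => Polynomial.coeff p d.natDegree) hcd
    simp only [Polynomial.coeff_C_mul, hd.coeff_natDegree, mul_one,
      Polynomial.coeff_eq_zero_of_natDegree_lt hlt] at this
    rw [this, map_zero] at hfc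
    exact hfne hfc
  -- the bivariate polynomial `n(X) - Y d(X)` and Gauss's lemma
  set Q : Polynomial (Polynomial k) := C n - C d * X with hQ
  have hQcoeff0 : Q.coeff 0 = n := by simp [hQ]
  have hQcoeff1 : Q.coeff 1 = -d := by simp [hQ]
  have hQprim : Q.IsPrimitive := by
    intro r hr
    rw [Polynomial.C_dvd_iff_dvd_coeff] at hr
    have h0 := hr 0; have h1 := hr 1
    rw [hQcoeff0] at h0; rw [hQcoeff1] at h1
    exact hcop.isUnit_of_dvd' h0 ((dvd_neg).mp h1)
  have hQmap : Q.map φ₀ = C (-(φ₀ d)) * X + C (φ₀ n) := by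
    simp only [hQ, Polynomial.map_sub, Polynomial.map_mul, Polynomial.map_C, Polynomial.map_X,
      map_neg]
    ring
  have hQmapirr : Irreducible (Q.map φ₀) := by
    apply Polynomial.irreducible_of_degree_eq_one
    rw [hQmap]
    exact Polynomial.degree_linear (neg_ne_zero.mpr hdne)
  have hQirr : Irreducible Q :=
    (hQprim.irreducible_iff_irreducible_map_fraction_map (K := RatFunc k)).mpr hQmapirr
  -- swap variables
  have hQ2irr : Irreducible (polySwapEquiv Q) := (MulEquiv.irreducible_iff _).mpr hQirr
  have hQ2 : polySwapEquiv Q = n.map C - d.map C * C X := by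
    show polySwap Q = _
    rw [hQ, map_sub, map_mul, polySwap_C, polySwap_C, polySwap_X]
  rw [hQ2] at hQ2irr
  set Q2 : Polynomial (Polynomial k) := n.map C - d.map C * C X with hQ2'
  have hQ2coeff : ∀ i, Q2.coeff i = C (n.coeff i) - C (d.coeff i) * X := by
    intro i
    simp [hQ2', Polynomial.coeff_map, Polynomial.coeff_mul_C]
  have hQ2prim : Q2.IsPrimitive := by
    intro r hr
    rw [Polynomial.C_dvd_iff_dvd_coeff] at hr
    by_contra hru
    -- at i = d.natDegree, the coefficient is `-X`, so `r` is a multiple of `X`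
    have hD := hr d.natDegree
    rw [hQ2coeff d.natDegree, Polynomial.coeff_eq_zero_of_natDegree_lt hlt,
      hd.coeff_natDegree, map_zero, map_one, one_mul, zero_sub] at hD
    have hrX : r ∣ X := (dvd_neg).mp hD
    obtain ⟨s, hs⟩ := hrX
    rcases (Polynomial.irreducible_X (R := k)).isUnit_or_isUnit hs with h | h
    · exact hru h
    · -- then `X ∣ r`, but `r` divides the coefficient at `n.natDegree`, whose constant
      -- term is `n.leadingCoeff ≠ 0`
      have hXr : (X : Polynomial k) ∣ r := by
        refine ⟨↑h.unit⁻¹, ?_⟩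
        rw [eq_comm, Units.mul_inv_eq_iff_eq_mul, IsUnit.unit_spec, hs, mul_comm]
      have h2 := hXr.trans (hr n.natDegree)
      rw [hQ2coeff] at h2
      have h3 : (X : Polynomial k) ∣ C (d.coeff n.natDegree) * X := dvd_mul_left _ _
      have h4 : (X : Polynomial k) ∣ C (n.coeff n.natDegree) := by
        have := dvd_add h2 h3
        rwa [sub_add_cancel] at this
      rw [Polynomial.X_dvd_iff, Polynomial.coeff_C_zero] at h4
      exact Polynomial.leadingCoeff_ne_zero.mpr hn h4
  -- Gauss again: Q2 is irreducible over `RatFunc k` viewed as Frac(k[Y])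
  have hQ3irr : Irreducible (Q2.map φ₀) :=
    (hQ2prim.irreducible_iff_irreducible_map_fraction_map (K := RatFunc k)).mp hQ2irr
  have hQ3 : Q2.map φ₀ = n.map RatFunc.C - d.map RatFunc.C * C RatFunc.X := by
    rw [hQ2', Polynomial.map_sub, Polynomial.map_mul, Polynomial.map_map, Polynomial.map_map,
      Polynomial.map_C]
    have hcomp : φ₀.comp Polynomial.C = RatFunc.C := by
      ext a; exact RatFunc.algebraMap_C a
    rw [hcomp]
    norm_num [hφ₀, RatFunc.algebraMap_X]
  rw [hQ3] at hQ3irr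
  -- the isomorphism `RatFunc k ≃ k(f)`
  set F := IntermediateField.adjoin k {f} with hF
  have hfF : f ∈ F := IntermediateField.mem_adjoin_simple_self k f
  set ψ : Polynomial k →+* RatFunc k := (Polynomial.aeval f : Polynomial k →ₐ[k] RatFunc k).toRingHom with hψ
  have hψinj : Function.Injective ψ := transcendental_iff_injective.mp htrans
  set Φ : RatFunc k →+* RatFunc k := IsFractionRing.lift hψinj with hΦ
  have hΦa : ∀ a : Polynomial k, Φ (φ₀ a) = Polynomial.aeval f a := fun a =>
    IsFractionRing.lift_algebraMap hψinj a
  have hΦmem : ∀ z, Φ z ∈ F := by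
    intro z
    induction z using RatFunc.induction_on with
    | f p q hq =>
      rw [map_div₀, hΦa, hΦa]
      exact div_mem
        (IntermediateField.algebra_adjoin_le_adjoin k {f} (Polynomial.aeval_mem_adjoin_singleton k f))
        (IntermediateField.algebra_adjoin_le_adjoin k {f} (Polynomial.aeval_mem_adjoin_singleton k f))
  have hΦX : Φ RatFunc.X = f := by
    rw [← RatFunc.algebraMap_X (K := k), hΦa, Polynomial.aeval_X]
  have hΦC : ∀ a : k, Φ (RatFunc.C a) = RatFunc.C a := by
    intro a
    have h := hΦa (Polynomial.C a)
    rw [RatFunc.algebraMap_C] at h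
    rw [h, Polynomial.aeval_C, RatFunc.algebraMap_eq_C]
  set Φ' : RatFunc k →+* F := Φ.codRestrict F.toSubfield hΦmem with hΦ'
  have hΦ'bij : Function.Bijective Φ' := by
    constructor
    · intro a b hab
      exact Φ.injective (congrArg Subtype.val hab)
    · intro z
      set E : IntermediateField k (RatFunc k) := Φ.fieldRange.toIntermediateField
        (fun c => ⟨RatFunc.C c, hΦC c⟩) with hE
      have hFE : F ≤ E := by
        rw [hF, IntermediateField.adjoin_le_iff]
        intro x hx
        rw [Set.mem_singleton_iff] at hx
        exact ⟨RatFunc.X, by rw [hx] at *; exact hΦX⟩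
      obtain ⟨w, hw⟩ := hFE z.2
      exact ⟨w, Subtype.ext hw⟩
  set e : RatFunc k ≃+* F := RingEquiv.ofBijective Φ' hΦ'bij with he
  -- the minimal polynomial of `X` over `k(f)`
  set y : F := ⟨f, hfF⟩ with hy
  have hyne : y ≠ 0 := fun h => hfne (congrArg Subtype.val h)
  set P : Polynomial F := n.map (algebraMap k F) - C y * d.map (algebraMap k F) with hP
  have hcoeF : ∀ a : k, ((algebraMap k F a : F) : RatFunc k) = RatFunc.C a := by
    intro a
    calc ((algebraMap k F a : F) : RatFunc k)
        = algebraMap F (RatFunc k) (algebraMap k F a) :=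
          (IntermediateField.algebraMap_apply F _).symm
      _ = algebraMap k (RatFunc k) a := (IsScalarTower.algebraMap_apply k F (RatFunc k) a).symm
      _ = RatFunc.C a := by rw [RatFunc.algebraMap_eq_C]
  have heC : ∀ a : k, e (RatFunc.C a) = algebraMap k F a := by
    intro a
    apply Subtype.ext
    show Φ (RatFunc.C a) = _
    rw [hΦC, ← hcoeF a]
  have heX : e RatFunc.X = y := Subtype.ext hΦX
  have hPe : P = Polynomial.map (e : RatFunc k →+* F)
      (n.map RatFunc.C - d.map RatFunc.C * C RatFunc.X) := by
    refine Polynomial.ext fun i => ?_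
    calc P.coeff i
        = algebraMap k F (n.coeff i) - algebraMap k F (d.coeff i) * y := by
          simp [hP, Polynomial.coeff_map, mul_comm]
      _ = e (RatFunc.C (n.coeff i)) - e (RatFunc.C (d.coeff i)) * e RatFunc.X := by
          rw [heC, heC, heX]
      _ = e ((n.map RatFunc.C - d.map RatFunc.C * C RatFunc.X).coeff i) := by
          rw [← map_mul, ← map_sub]
          congr 1
          simp [Polynomial.coeff_map, Polynomial.coeff_mul_C]
      _ = (Polynomial.map (e : RatFunc k →+* F)
            (n.map RatFunc.C - d.map RatFunc.C * C RatFunc.X)).coeff i := by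
          rw [Polynomial.coeff_map]
          rfl
  have hPirr : Irreducible P := by
    rw [hPe]
    have := (MulEquiv.irreducible_iff (Polynomial.mapEquiv (e : RatFunc k ≃+* F))).mpr hQ3irr
    rwa [Polynomial.mapEquiv_apply] at this
  -- `X` is a root of `P`
  have haev : ∀ a : Polynomial k, Polynomial.aeval RatFunc.X a = φ₀ a := by
    intro a
    induction a using Polynomial.induction_on' with
    | add p q hp hq => rw [map_add, map_add, hp, hq]
    | monomial i c =>
      rw [← Polynomial.C_mul_X_pow_eq_monomial, map_mul, map_mul, map_pow, map_pow,
        Polynomial.aeval_C, Polynomial.aeval_X, hφ₀, RatFunc.algebraMap_C, RatFunc.algebraMap_X,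
        RatFunc.algebraMap_eq_C]
  have hPaev : Polynomial.aeval (RatFunc.X : RatFunc k) P = 0 := by
    rw [hP, map_sub, map_mul, Polynomial.aeval_C, Polynomial.aeval_map_algebraMap,
      Polynomial.aeval_map_algebraMap, haev, haev, IntermediateField.algebraMap_apply]
    show φ₀ n - f * φ₀ d = 0
    rw [hfd, sub_self]
  -- the degree of `P`
  have hPdeg : P.natDegree = d.natDegree := by
    rw [hP, Polynomial.natDegree_sub_eq_right_of_natDegree_lt, Polynomial.natDegree_C_mul hyne,
      Polynomial.natDegree_map]
    rw [Polynomial.natDegree_C_mul hyne, Polynomial.natDegree_map, Polynomial.natDegree_map]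
    exact hlt
  have hPne : P ≠ 0 := by
    intro h
    rw [h, Polynomial.natDegree_zero] at hPdeg
    omega
  have hmin := minpoly.eq_of_irreducible hPirr hPaev
  have hint : IsIntegral F (RatFunc.X : RatFunc k) := by
    refine ⟨P * C P.leadingCoeff⁻¹, Polynomial.monic_mul_leadingCoeff_inv hPne, ?_⟩
    rw [← Polynomial.aeval_def, map_mul, hPaev, zero_mul]
  -- `k(X) = k(f)(X)`
  have h1 : ∀ a : Polynomial k, φ₀ a ∈ IntermediateField.adjoin F {(RatFunc.X : RatFunc k)} := by
    intro a
    induction a using Polynomial.induction_on' with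
    | add p' q' hp hq => rw [map_add]; exact add_mem hp hq
    | monomial i c =>
      rw [← Polynomial.C_mul_X_pow_eq_monomial, map_mul, map_pow, hφ₀, RatFunc.algebraMap_C,
        RatFunc.algebraMap_X]
      refine mul_mem ?_ (pow_mem (IntermediateField.mem_adjoin_simple_self F (RatFunc.X : RatFunc k)) i)
      have h2 : RatFunc.C c = algebraMap F (RatFunc k) (algebraMap k F c) := by
        rw [IntermediateField.algebraMap_apply, hcoeF]
      rw [h2]
      exact (IntermediateField.adjoin F {(RatFunc.X : RatFunc k)}).algebraMap_mem _
  have htop : IntermediateField.adjoin F {(RatFunc.X : RatFunc k)} = ⊤ := by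
    have hall : ∀ z : RatFunc k, z ∈ IntermediateField.adjoin F {(RatFunc.X : RatFunc k)} := by
      intro z
      induction z using RatFunc.induction_on with
      | f pp qq hqq => exact div_mem (h1 pp) (h1 qq)
    exact le_antisymm le_top fun z _ => hall z
  -- conclusion
  rw [← IntermediateField.finrank_top', ← htop, IntermediateField.adjoin.finrank hint, ← hmin,
    Polynomial.natDegree_mul_C (inv_ne_zero (Polynomial.leadingCoeff_ne_zero.mpr hPne))]
  exact hPdeg

end AuxiliaryForStmt13

open RatFunc


/-- For `γ ≠ 1` and `f = X^((q+1)/2)/((X+1)^(q+1) − X^(q+1) − γ) ∈ k(X)`, the degree of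
the extension `k(X)/k(f)` is exactly `q` (so the parametrization `φ₃` is birational). -/
theorem stmt_13 (p e q : ℕ) (hp : p.Prime) (hp2 : p ≠ 2) (hq : q = p ^ e) (hq5 : 5 ≤ q)
    (k : Type*) [Field k] [IsAlgClosed k] [CharP k p]
    (γ : k) (hγ1 : γ ≠ 1)
    (f : RatFunc k)
    (hf : f = RatFunc.X ^ ((q + 1) / 2) /
      ((RatFunc.X + 1) ^ (q + 1) - RatFunc.X ^ (q + 1) - RatFunc.C γ)) :
    Module.finrank (IntermediateField.adjoin k {f}) (RatFunc k) = q := by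
  haveI : Fact p.Prime := ⟨hp⟩
  haveI : CharP (RatFunc k) p :=
    charP_of_injective_algebraMap (algebraMap k (RatFunc k)).injective p
  set m := (q + 1) / 2 with hm
  set c := 1 - γ with hc
  have hcne : c ≠ 0 := sub_ne_zero_of_ne (Ne.symm hγ1)
  set n : Polynomial k := Polynomial.X ^ m with hn'
  set d : Polynomial k := Polynomial.X ^ q + (Polynomial.X + Polynomial.C c) with hd'
  have hdlt : (Polynomial.X + Polynomial.C c : Polynomial k).degree < (q : WithBot ℕ) := by
    rw [Polynomial.degree_X_add_C]
    exact_mod_cast (by omega : 1 < q)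
  have hdmonic : d.Monic := Polynomial.monic_X_pow_add hdlt
  have hddeg : d.natDegree = q := by
    have : d.degree = q := by
      rw [hd', Polynomial.degree_add_eq_left_of_degree_lt (by rwa [Polynomial.degree_X_pow]),
        Polynomial.degree_X_pow]
    exact Polynomial.natDegree_eq_of_degree_eq_some this
  have hnne : n ≠ 0 := pow_ne_zero _ Polynomial.X_ne_zero
  have hlt : n.natDegree < d.natDegree := by
    rw [hn', Polynomial.natDegree_X_pow, hddeg]
    omega
  have hcop : IsCoprime n d := by
    refine IsCoprime.pow_left ?_
    refine (Polynomial.irreducible_X.coprime_iff_not_dvd).mpr ?_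
    rw [Polynomial.X_dvd_iff, hd']
    have hq0 : q ≠ 0 := by omega
    simp only [Polynomial.coeff_add, Polynomial.coeff_X_pow, Polynomial.coeff_X_zero,
      Polynomial.coeff_C_zero, if_neg (Ne.symm hq0), zero_add]
    simpa using hcne
  have hfrob : ((RatFunc.X + 1 : RatFunc k)) ^ q = RatFunc.X ^ q + 1 := by
    rw [hq, add_pow_char_pow, one_pow]
  have hfd : f = algebraMap (Polynomial k) (RatFunc k) n / algebraMap (Polynomial k) (RatFunc k) d := by
    rw [hf]
    congr 1
    · rw [hn', map_pow, RatFunc.algebraMap_X]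
    · rw [hd', map_add, map_add, map_pow, RatFunc.algebraMap_X, RatFunc.algebraMap_C, hc,
        map_sub, map_one, pow_succ, pow_succ, hfrob]
      ring
  rw [hfd] at *
  rw [aux_finrank k n d hnne hdmonic hlt hcop _ rfl, hddeg]
end

section
/- Let γ ∈ k satisfy γ^q = γ and γ ∉ {0, 1, −1}. Then for every s ∈ k, the two vectors (s^{(q+1)/2}, (s+1)^{q+1}, s^{q+1} + γ) and (c·s^{(q−1)/2}, (s+1)^q, s^q) in k³, where c ∈ k is the image of the natural number (q+1)/2, are linearly independent over k; equivalently, the 2×3 matrix with these rows has rank 2. (This expresses that the differential of the parametrization φ₃ of the curve C₃ is injective at every point (s:1).) -/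
/-- For `γ ∈ 𝔽_q \ {0, ±1}` and every `s ∈ k`, the vectors
`(s^((q+1)/2), (s+1)^(q+1), s^(q+1) + γ)` and `(c·s^((q-1)/2), (s+1)^q, s^q)` in `k³`,
where `c` is the image of `(q+1)/2` in `k`, are linearly independent over `k`
(the differential of the parametrization `φ₃` is injective at every `(s:1)`). -/
theorem stmt_14 (p e q : ℕ) (hp : p.Prime) (hp2 : p ≠ 2) (hq : q = p ^ e) (hq5 : 5 ≤ q)
    (k : Type*) [Field k] [IsAlgClosed k] [CharP k p]
    (γ : k) (hγq : γ ^ q = γ) (hγ0 : γ ≠ 0) (hγ1 : γ ≠ 1) (hγm1 : γ ≠ -1)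
    (c : k) (hc : c = (((q + 1) / 2 : ℕ) : k)) :
    ∀ s : k, LinearIndependent k
      ![(![s ^ ((q + 1) / 2), (s + 1) ^ (q + 1), s ^ (q + 1) + γ] : Fin 3 → k),
        ![c * s ^ ((q - 1) / 2), (s + 1) ^ q, s ^ q]] := by
  intro s
  have he : e ≠ 0 := by rintro rfl; simp [hq] at hq5
  have hqodd : Odd q := hq ▸ (hp.odd_of_ne_two hp2).pow
  have hq0 : (q : k) = 0 := by
    rw [hq, Nat.cast_pow, CharP.cast_eq_zero k p, zero_pow he]
  have h2 : (2 : k) ≠ 0 := by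
    have : ((2 : ℕ) : k) ≠ 0 := by
      rw [Ne, CharP.cast_eq_zero_iff k p 2]
      intro h
      exact hp2 ((Nat.prime_dvd_prime_iff_eq hp Nat.prime_two).mp h)
    simpa using this
  have hc2 : c * 2 = 1 := by
    have hd : ((q + 1) / 2 * 2 : ℕ) = q + 1 := Nat.div_mul_cancel (by rcases hqodd with ⟨t, ht⟩; omega)
    have hd' := congrArg (Nat.cast : ℕ → k) hd
    push_cast at hd'
    rw [hc, hd', hq0]; norm_num
  set m := (q - 1) / 2 with hm
  have hm1 : (q + 1) / 2 = m + 1 := by rcases hqodd with ⟨t, ht⟩; omega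
  rw [LinearIndependent.pair_iff]
  intro a b hab
  have h0 := congr_fun hab 0
  have h1 := congr_fun hab 1
  have h2' := congr_fun hab 2
  simp only [Pi.add_apply, Pi.smul_apply, Matrix.cons_val_zero, Matrix.cons_val_one,
    Matrix.head_cons, Matrix.cons_val_two, Matrix.tail_cons, smul_eq_mul,
    Pi.zero_apply] at h0 h1 h2'
  rw [hm1, pow_succ] at h0
  have hE1 : (s + 1) ^ q * (a * (s + 1) + b) = 0 := by
    rw [← h1, pow_succ]; ring
  by_cases hs : s = -1
  · subst hs
    have hsq : (-1 : k) ^ q = -1 := hqodd.neg_one_pow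
    have hsq1 : ((-1 : k)) ^ (q + 1) = 1 := by rw [pow_succ, hsq]; ring
    rw [hsq1, hsq] at h2'
    have hmne : ((-1 : k)) ^ m ≠ 0 := pow_ne_zero _ (by norm_num)
    have hbc : b * c = a := by
      have h' : (-1 : k) ^ m * (b * c - a) = 0 := by rw [← h0]; ring
      rcases mul_eq_zero.mp h' with h | h
      · exact absurd h hmne
      · linear_combination h
    have hb : b = a * (1 + γ) := by linear_combination -h2'
    have ha : a = 0 := by
      by_contra ha
      rw [hb] at hbc
      have h3 : a * ((1 + γ) * c) = a * 1 := by linear_combination hbc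
      have h4 := mul_left_cancel₀ ha h3
      have h5 : (1 + γ) * (c * 2) = 2 := by linear_combination 2 * h4
      rw [hc2, mul_one] at h5
      exact hγ1 (by linear_combination h5)
    exact ⟨ha, by rw [hb, ha, zero_mul]⟩
  · have hs1 : s + 1 ≠ 0 := fun h => hs (by linear_combination h)
    have hab1 : a * (s + 1) + b = 0 := by
      rcases mul_eq_zero.mp hE1 with h | h
      · exact absurd h (pow_ne_zero _ hs1)
      · exact h
    have hb : b = -(a * (s + 1)) := by linear_combination hab1
    by_cases ha : a = 0
    · exact ⟨ha, by rw [hb, ha]; ring⟩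
    · exfalso
      have hsqγ : s ^ q = γ := by
        have h' : a * (γ - s ^ q) = 0 := by
          rw [← h2', hb, pow_succ]; ring
        rcases mul_eq_zero.mp h' with h | h
        · exact absurd h ha
        · linear_combination -h
      have hs0 : s ≠ 0 := by
        rintro rfl
        rw [zero_pow (by omega : q ≠ 0)] at hsqγ
        exact hγ0 hsqγ.symm
      have hkey : s ^ m * (a * s + b * c) = 0 := by rw [← h0]; ring
      have hlin : a * s + b * c = 0 := by
        rcases mul_eq_zero.mp hkey with h | h
        · exact absurd h (pow_ne_zero _ hs0)
        · exact h
      rw [hb] at hlin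
      have h1' : a * (s * 2) = a * ((s + 1) * (c * 2)) := by linear_combination 2 * hlin
      rw [hc2, mul_one] at h1'
      have hs1' : s = 1 := by linear_combination mul_left_cancel₀ ha h1'
      rw [hs1', one_pow] at hsqγ
      exact hγ1 hsqγ.symm
end

section
/- Let γ ∈ k satisfy γ^q = γ, let c₁ ∈ k be the image of the natural number (q+1)/2 and c₂ ∈ k the image of the natural number (q²−1)/4. Then in the polynomial ring k[X], the determinant of the 3×3 matrix with rows (X^{(q+1)/2}, (X+1)^{q+1}, X^{q+1} + γ·1), (c₁·X^{(q−1)/2}, (X+1)^q, X^q), and (c₂·X^{(q−3)/2}, 0, 0) equals c₂ · X^{(q−3)/2} · (X+1)^q · (X − γ·1)^q. In particular, since c₂ ≠ 0 in k, its roots in k are exactly 0, −1 and γ. (This is the Hessian determinant computation showing that all flexes of the curve C₃ are (1:0), (0:1), (−1:1) and (γ:1).) -/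
open Polynomial Matrix

/-- Hessian determinant computation for the curve `C₃`: the determinant of the matrix with
rows `(X^((q+1)/2), (X+1)^(q+1), X^(q+1)+γ)`, `(c₁·X^((q-1)/2), (X+1)^q, X^q)`,
`(c₂·X^((q-3)/2), 0, 0)` equals `c₂·X^((q-3)/2)·(X+1)^q·(X−γ)^q`; in particular `c₂ ≠ 0`
and its roots in `k` are exactly `0`, `-1` and `γ`. -/
theorem stmt_15 (p e q : ℕ) (hp : p.Prime) (hp2 : p ≠ 2) (hq : q = p ^ e) (hq5 : 5 ≤ q)
    (k : Type*) [Field k] [IsAlgClosed k] [CharP k p]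
    (γ : k) (hγq : γ ^ q = γ)
    (c₁ c₂ : k) (hc₁ : c₁ = (((q + 1) / 2 : ℕ) : k)) (hc₂ : c₂ = (((q ^ 2 - 1) / 4 : ℕ) : k))
    (M : Matrix (Fin 3) (Fin 3) k[X])
    (hM : M = !![X ^ ((q + 1) / 2), (X + 1) ^ (q + 1), X ^ (q + 1) + C γ * 1;
                 C c₁ * X ^ ((q - 1) / 2), (X + 1) ^ q, X ^ q;
                 C c₂ * X ^ ((q - 3) / 2), 0, 0]) :
    M.det = C c₂ * X ^ ((q - 3) / 2) * (X + 1) ^ q * (X - C γ * 1) ^ q ∧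
      c₂ ≠ 0 ∧
      ∀ x : k, M.det.eval x = 0 ↔ x = 0 ∨ x = -1 ∨ x = γ := by
  haveI := Fact.mk hp
  -- q is odd
  have hqodd : Odd q := by
    rw [hq]
    exact (hp.odd_of_ne_two hp2).pow
  obtain ⟨m, hm⟩ := hqodd
  have hq2 : q ^ 2 - 1 = 4 * (m * m + m) := by
    have : q ^ 2 = 4 * (m * m + m) + 1 := by nlinarith [hm]
    omega
  have hc₂' : (4 : k) * c₂ = -1 := by
    have h1 : ((q ^ 2 - 1 : ℕ) : k) = (q : k) ^ 2 - 1 := by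
      have : 1 ≤ q ^ 2 := by nlinarith
      push_cast [Nat.cast_sub this]
      ring
    have hqk : (q : k) = 0 := by
      have he : e ≠ 0 := by
        rintro rfl
        simp [hq] at hq5 <;> omega
      rw [hq]
      push_cast
      simp [CharP.cast_eq_zero k p, zero_pow he]
    have h2 : c₂ = ((m * m + m : ℕ) : k) := by
      rw [hc₂, hq2, Nat.mul_div_cancel_left _ (by norm_num)]
    have h3 : (4 : k) * ((m * m + m : ℕ) : k) = ((q ^ 2 - 1 : ℕ) : k) := by
      rw [hq2]; push_cast; ring
    rw [h2, h3, h1, hqk]; ring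
  have hc₂0 : c₂ ≠ 0 := by
    intro h
    rw [h, mul_zero] at hc₂'
    exact one_ne_zero (neg_eq_zero.mp hc₂'.symm)
  -- Frobenius
  have hfrob : (X - C γ * 1 : k[X]) ^ q = X ^ q - C γ := by
    rw [mul_one, hq, sub_pow_char_pow, ← C_pow, ← hq, hγq]
  have hdet : M.det = C c₂ * X ^ ((q - 3) / 2) * (X + 1) ^ q * (X - C γ * 1) ^ q := by
    rw [hM]
    simp only [det_fin_three, Matrix.cons_val', Matrix.cons_val_zero, Matrix.cons_val_one,
      Matrix.head_cons, Matrix.empty_val', Matrix.cons_val_fin_one, Matrix.head_fin_const,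
      Matrix.of_apply, Matrix.cons_val_two, Matrix.tail_cons, mul_zero, zero_mul,
      sub_zero, add_zero, zero_add]
    rw [hfrob]
    ring
  refine ⟨hdet, hc₂0, fun x => ?_⟩
  rw [hdet, hfrob]
  have hqne : q ≠ 0 := by omega
  have hmne : (q - 3) / 2 ≠ 0 := by omega
  have hγx : x ^ q - γ = (x - γ) ^ q := by
    rw [hq, sub_pow_char_pow, ← hq, hγq]
  simp only [eval_mul, eval_pow, eval_sub, eval_add, eval_X, eval_one, eval_C, hγx]
  rw [mul_eq_zero, mul_eq_zero, mul_eq_zero]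
  constructor
  · rintro (((h | h) | h) | h)
    · exact absurd h hc₂0
    · exact Or.inl (pow_eq_zero_iff hmne |>.mp h)
    · exact Or.inr (Or.inl (eq_neg_of_add_eq_zero_left (pow_eq_zero_iff hqne |>.mp h)))
    · exact Or.inr (Or.inr (sub_eq_zero.mp (pow_eq_zero_iff hqne |>.mp h)))
  · rintro (rfl | rfl | rfl)
    · exact Or.inl (Or.inl (Or.inr (by simp [hmne])))
    · exact Or.inl (Or.inr (by simp [hqne]))
    · exact Or.inr (by simp [hqne])
end

section
/- Assume q ≥ 7. Let γ ∈ k satisfy γ^q = γ, γ^{(q−1)/2} = 1 and γ ∉ {1, −1}, and let f = X^{(q+1)/2} − γ·X^{−(q+1)/2} ∈ k(X). Then the field extension k(X) over the intermediate field k(f) generated by f over k is a Galois extension, and its Galois group is isomorphic to the dihedral group of order q+1 (DihedralGroup ((q+1)/2)). (This is the field-theoretic content of the statement that P₁ = (0:1:0) is an outer Galois point for the curve C₄ parametrized by (s:t) ↦ (s^{(q+1)/2}t^{(q+1)/2} : (s+t)^{(q+1)/2}(s+γt)^{(q+1)/2} : s^{q+1} − γt^{q+1}), with Galois group D_{q+1}.)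 -/
open Polynomial

set_option linter.unusedSectionVars false
namespace Stmt16Aux

variable {K : Type*} [Field K]

/-- Two `K`-algebra homs out of `RatFunc K` agreeing on `X` are equal. -/
theorem ratFuncAlgHom_ext {L : Type*} [Field L] [Algebra K L]
    (ψ₁ ψ₂ : RatFunc K →ₐ[K] L) (h : ψ₁ RatFunc.X = ψ₂ RatFunc.X) : ψ₁ = ψ₂ := by
  have key : ψ₁.comp (IsScalarTower.toAlgHom K K[X] (RatFunc K)) =
      ψ₂.comp (IsScalarTower.toAlgHom K K[X] (RatFunc K)) := by
    apply Polynomial.algHom_ext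
    simpa [RatFunc.algebraMap_X] using h
  ext f
  rw [← RatFunc.num_div_denom f, map_div₀, map_div₀]
  have k1 := DFunLike.congr_fun key f.num
  have k2 := DFunLike.congr_fun key f.denom
  simp only [AlgHom.comp_apply, IsScalarTower.coe_toAlgHom'] at k1 k2
  rw [k1, k2]

theorem aeval_C_mul_X_ne_zero {a : K} (ha : a ≠ 0) {P : K[X]} (hP : P ≠ 0) :
    P.comp (C a * X) ≠ 0 := by
  intro h
  rcases Polynomial.comp_eq_zero_iff.mp h with h' | ⟨_, h'⟩
  · exact hP h'
  · apply_fun natDegree at h'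
    simp [natDegree_C_mul ha] at h'

theorem natDegree_reflect_le {P : K[X]} {N : ℕ} (h : P.natDegree ≤ N) :
    (reflect N P).natDegree ≤ N := by
  rw [Polynomial.natDegree_le_iff_coeff_eq_zero]
  intro i hi
  rw [coeff_reflect]
  apply Polynomial.coeff_eq_zero_of_natDegree_lt
  rcases le_or_gt i N with hle | hlt
  · omega
  · rw [Polynomial.revAt_eq_self_of_lt hlt]; omega

theorem reflect_reflect (P : K[X]) (N : ℕ) : reflect N (reflect N P) = P := by
  ext i
  rw [coeff_reflect, coeff_reflect, Polynomial.revAt_invol]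

theorem aeval_inv_X_ne_zero {P : K[X]} (hP : P ≠ 0) :
    Polynomial.aeval (RatFunc.X⁻¹ : RatFunc K) P ≠ 0 := by
  letI : Invertible (RatFunc.X : RatFunc K) := invertibleOfNonzero RatFunc.X_ne_zero
  set P' : K[X] := reflect P.natDegree P with hP'
  have hd' : P'.natDegree ≤ P.natDegree := natDegree_reflect_le le_rfl
  have key := Polynomial.eval₂_reflect_eq_zero_iff (algebraMap K (RatFunc K))
    (RatFunc.X : RatFunc K) P.natDegree P' hd'
  rw [reflect_reflect] at key
  have hiX : (⅟(RatFunc.X : RatFunc K)) = (RatFunc.X : RatFunc K)⁻¹ := invOf_eq_inv _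
  rw [hiX] at key
  rw [Polynomial.aeval_def]
  intro h
  rw [key] at h
  have : (Polynomial.aeval (RatFunc.X : RatFunc K)) P' = 0 := by
    rw [Polynomial.aeval_def]; exact h
  rw [← RatFunc.algebraMap_X, Polynomial.aeval_algebraMap_apply,
    Polynomial.aeval_X_left_apply] at this
  have hP'0 : P' ≠ 0 := by
    simpa [hP', Polynomial.reflect_eq_zero_iff] using hP
  exact hP'0 (RatFunc.algebraMap_injective K (by simpa using this))

open scoped nonZeroDivisors

theorem cond_of_ne_zero {g : RatFunc K} (h : ∀ P : K[X], P ≠ 0 → Polynomial.aeval g P ≠ 0) :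
    K[X]⁰ ≤ Submonoid.comap (Polynomial.aeval g : K[X] →ₐ[K] RatFunc K) (RatFunc K)⁰ := by
  intro P hP
  simp only [Submonoid.mem_comap]
  rw [mem_nonZeroDivisors_iff_ne_zero] at hP ⊢
  exact h P hP

/-- substitution hom -/
noncomputable def ev (g : RatFunc K) (hg : ∀ P : K[X], P ≠ 0 → Polynomial.aeval g P ≠ 0) :
    RatFunc K →ₐ[K] RatFunc K :=
  RatFunc.liftAlgHom (Polynomial.aeval g) (cond_of_ne_zero hg)

@[simp] theorem ev_X (g : RatFunc K) (hg) : ev g hg RatFunc.X = g := by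
  rw [ev, RatFunc.liftAlgHom_apply, RatFunc.num_X, RatFunc.denom_X]
  simp

theorem scale_cond {a : K} (ha : a ≠ 0) :
    ∀ P : K[X], P ≠ 0 → Polynomial.aeval (algebraMap K (RatFunc K) a * RatFunc.X) P ≠ 0 := by
  intro P hP
  have h1 : (algebraMap K (RatFunc K) a * RatFunc.X) =
      algebraMap K[X] (RatFunc K) (C a * X) := by
    rw [map_mul, RatFunc.algebraMap_C, RatFunc.algebraMap_X, RatFunc.algebraMap_eq_C]
  rw [h1, Polynomial.aeval_algebraMap_apply]
  intro h
  have h2 := RatFunc.algebraMap_injective K (by simpa using h)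
  rw [← Polynomial.comp_eq_aeval] at h2
  exact aeval_C_mul_X_ne_zero ha hP h2

theorem flip_cond {a : K} (ha : a ≠ 0) :
    ∀ P : K[X], P ≠ 0 → Polynomial.aeval (algebraMap K (RatFunc K) a * RatFunc.X⁻¹) P ≠ 0 := by
  intro P hP
  have key : (algebraMap K (RatFunc K) a * RatFunc.X⁻¹) =
      Polynomial.aeval (RatFunc.X⁻¹ : RatFunc K) (C a * X) := by
    simp [RatFunc.algebraMap_eq_C]
  rw [key, ← Polynomial.aeval_comp]
  exact aeval_inv_X_ne_zero (aeval_C_mul_X_ne_zero ha hP)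


theorem ratFuncAlgEquiv_ext {ψ₁ ψ₂ : RatFunc K ≃ₐ[K] RatFunc K}
    (h : ψ₁ RatFunc.X = ψ₂ RatFunc.X) : ψ₁ = ψ₂ := by
  have key := ratFuncAlgHom_ext ψ₁.toAlgHom ψ₂.toAlgHom (by simpa using h)
  exact AlgEquiv.ext fun x => by simpa using AlgHom.congr_fun key x

@[simp] theorem ev_C (g : RatFunc K) (hg) (a : K) : ev g hg (RatFunc.C a) = RatFunc.C a := by
  have h := (ev g hg).commutes a
  rwa [RatFunc.algebraMap_eq_C] at h

theorem C_ne_zero' {a : K} (ha : a ≠ 0) : (RatFunc.C a : RatFunc K) ≠ 0 := by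
  rw [← RatFunc.algebraMap_eq_C]
  simpa using ha

/-- `X ↦ a * X` -/
noncomputable def sca (a : K) (ha : a ≠ 0) : RatFunc K ≃ₐ[K] RatFunc K :=
  AlgEquiv.ofAlgHom (ev _ (scale_cond ha)) (ev _ (scale_cond (inv_ne_zero ha)))
    (ratFuncAlgHom_ext _ _ (by
      have hCa := C_ne_zero' ha
      simp [map_mul, map_inv₀, RatFunc.algebraMap_eq_C]
      field_simp))
    (ratFuncAlgHom_ext _ _ (by
      have hCa := C_ne_zero' ha
      simp [map_mul, map_inv₀, RatFunc.algebraMap_eq_C]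
      field_simp))

/-- `X ↦ a / X` -/
noncomputable def flp (a : K) (ha : a ≠ 0) : RatFunc K ≃ₐ[K] RatFunc K :=
  AlgEquiv.ofAlgHom (ev _ (flip_cond ha)) (ev _ (flip_cond ha))
    (ratFuncAlgHom_ext _ _ (by
      have hX : (RatFunc.X : RatFunc K) ≠ 0 := RatFunc.X_ne_zero
      have hCa := C_ne_zero' ha
      simp [map_mul, map_inv₀, RatFunc.algebraMap_eq_C]
      field_simp))
    (ratFuncAlgHom_ext _ _ (by
      have hX : (RatFunc.X : RatFunc K) ≠ 0 := RatFunc.X_ne_zero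
      have hCa := C_ne_zero' ha
      simp [map_mul, map_inv₀, RatFunc.algebraMap_eq_C]
      field_simp))

@[simp] theorem sca_X (a : K) (ha : a ≠ 0) :
    sca a ha RatFunc.X = RatFunc.C a * RatFunc.X := by
  have : sca a ha RatFunc.X = ev _ (scale_cond ha) RatFunc.X := rfl
  rw [this, ev_X, RatFunc.algebraMap_eq_C]

@[simp] theorem flp_X (a : K) (ha : a ≠ 0) :
    flp a ha RatFunc.X = RatFunc.C a * (RatFunc.X)⁻¹ := by
  have : flp a ha RatFunc.X = ev _ (flip_cond ha) RatFunc.X := rfl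
  rw [this, ev_X, RatFunc.algebraMap_eq_C]


@[simp] theorem sca_C (a : K) (ha : a ≠ 0) (b : K) :
    sca a ha (RatFunc.C b) = RatFunc.C b :=
  ev_C _ (scale_cond ha) b

@[simp] theorem flp_C (a : K) (ha : a ≠ 0) (b : K) :
    flp a ha (RatFunc.C b) = RatFunc.C b :=
  ev_C _ (flip_cond ha) b

theorem _root_.IsPrimitiveRoot.ne_zero'' {n : ℕ} [NeZero n] {ζ : K} (hζ : IsPrimitiveRoot ζ n) :
    ζ ≠ 0 := hζ.ne_zero (NeZero.ne n)

section Dihedral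

variable (n : ℕ) [NeZero n] (ζ c : K)

/-- `ζ ^ i` for `i : ZMod n`. -/
def chi (i : ZMod n) : K := ζ ^ i.val

variable {n ζ c}

theorem pow_val_mod (hζ1 : ζ ^ n = 1) (m : ℕ) : ζ ^ (m % n) = ζ ^ m := by
  conv_rhs => rw [← Nat.div_add_mod m n]
  rw [pow_add, pow_mul, hζ1, one_pow, one_mul]

theorem chi_zero : chi n ζ 0 = 1 := by
  simp [chi, ZMod.val_zero]

theorem chi_add (hζ1 : ζ ^ n = 1) (i j : ZMod n) :
    chi n ζ (i + j) = chi n ζ i * chi n ζ j := by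
  rw [chi, chi, chi, ZMod.val_add, pow_val_mod hζ1, pow_add]

theorem chi_ne_zero (hζ0 : ζ ≠ 0) (i : ZMod n) : chi n ζ i ≠ 0 :=
  pow_ne_zero _ hζ0

theorem chi_sub (hζ1 : ζ ^ n = 1) (hζ0 : ζ ≠ 0) (i j : ZMod n) :
    chi n ζ (i - j) = chi n ζ i * (chi n ζ j)⁻¹ := by
  have h := chi_add hζ1 (i - j) j
  rw [sub_add_cancel] at h
  field_simp [chi_ne_zero hζ0]
  exact h.symm

theorem chi_pow_n (hζ1 : ζ ^ n = 1) (i : ZMod n) : chi n ζ i ^ n = 1 := by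
  rw [chi, ← pow_mul, mul_comm, pow_mul, hζ1, one_pow]

theorem chi_eq_one_iff (hζ : IsPrimitiveRoot ζ n) {i : ZMod n} :
    chi n ζ i = 1 ↔ i = 0 := by
  constructor
  · intro h
    have hdvd : n ∣ i.val := by
      rwa [← hζ.pow_eq_one_iff_dvd]
    have h0 : i.val = 0 := Nat.eq_zero_of_dvd_of_lt hdvd i.val_lt
    rwa [ZMod.val_eq_zero] at h0
  · rintro rfl; exact chi_zero

variable (hζ : IsPrimitiveRoot ζ n) (hc : c ≠ 0)

/-- The dihedral group hom into automorphisms of `RatFunc K`. -/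
noncomputable def dihFun : DihedralGroup n → (RatFunc K ≃ₐ[K] RatFunc K) := fun g =>
  match g with
  | .r i => sca (chi n ζ i) (chi_ne_zero hζ.ne_zero'' i)
  | .sr i => flp (c * chi n ζ i) (mul_ne_zero hc (chi_ne_zero hζ.ne_zero'' i))

theorem dihFun_r (i : ZMod n) : dihFun hζ hc (.r i) = sca _ (chi_ne_zero hζ.ne_zero'' i) := rfl
theorem dihFun_sr (i : ZMod n) :
    dihFun hζ hc (.sr i) = flp _ (mul_ne_zero hc (chi_ne_zero hζ.ne_zero'' i)) := rfl

end Dihedral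


/-- The dihedral group hom into `K`-automorphisms of `RatFunc K`:
`r i ↦ (X ↦ ζ^i X)`, `sr i ↦ (X ↦ c ζ^i / X)`. -/
noncomputable def dih {n : ℕ} [NeZero n] {ζ c : K} (hζ : IsPrimitiveRoot ζ n) (hc : c ≠ 0) :
    DihedralGroup n →* (RatFunc K ≃ₐ[K] RatFunc K) where
  toFun := dihFun hζ hc
  map_one' := by
    rw [DihedralGroup.one_def, dihFun_r]
    apply ratFuncAlgEquiv_ext
    simp [chi_zero]
  map_mul' := by
    have hζ1 := hζ.pow_eq_one
    have hζ0 := hζ.ne_zero''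
    have hC : ∀ a : K, a ≠ 0 → (RatFunc.C a : RatFunc K) ≠ 0 := fun a ha => C_ne_zero' ha
    have hX : (RatFunc.X : RatFunc K) ≠ 0 := RatFunc.X_ne_zero
    rintro (i | i) (j | j) <;> apply ratFuncAlgEquiv_ext <;>
      simp only [DihedralGroup.r_mul_r, DihedralGroup.r_mul_sr, DihedralGroup.sr_mul_r,
        DihedralGroup.sr_mul_sr, dihFun_r, dihFun_sr, AlgEquiv.mul_apply, sca_X, flp_X,
        map_mul, map_inv₀, sca_C, flp_C]
    · rw [chi_add hζ1, map_mul]; ring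
    · rw [chi_sub hζ1 hζ0]
      simp only [map_mul, map_inv₀]
      have h1 := hC _ (chi_ne_zero hζ0 i)
      field_simp
    · rw [chi_add hζ1]
      simp only [map_mul]
      ring
    · rw [chi_sub hζ1 hζ0]
      simp only [map_mul, map_inv₀]
      have h1 := hC _ (chi_ne_zero hζ0 i)
      have h2 := hC _ hc
      field_simp

theorem dih_injective {n : ℕ} [NeZero n] {ζ c : K} (hζ : IsPrimitiveRoot ζ n) (hc : c ≠ 0) :
    Function.Injective (dih hζ hc) := by
  have hζ0 := hζ.ne_zero''
  have hX : (RatFunc.X : RatFunc K) ≠ 0 := RatFunc.X_ne_zero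
  rw [injective_iff_map_eq_one]
  rintro (i | i) h
  · have hx := congrArg (fun (ψ : RatFunc K ≃ₐ[K] RatFunc K) => ψ RatFunc.X) h
    simp only [dih, MonoidHom.coe_mk, OneHom.coe_mk, dihFun_r, sca_X, AlgEquiv.one_apply] at hx
    have h1 : RatFunc.C (chi n ζ i) = 1 :=
      mul_right_cancel₀ hX (hx.trans (one_mul RatFunc.X).symm)
    rw [← map_one RatFunc.C] at h1
    have := (RatFunc.C : K →+* RatFunc K).injective h1
    rw [chi_eq_one_iff hζ] at this
    rw [this]; rfl
  · have hx := congrArg (fun (ψ : RatFunc K ≃ₐ[K] RatFunc K) => ψ RatFunc.X) h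
    simp only [dih, MonoidHom.coe_mk, OneHom.coe_mk, dihFun_sr, flp_X, AlgEquiv.one_apply] at hx
    exfalso
    have h2 : RatFunc.C (c * chi n ζ i) = RatFunc.X * RatFunc.X := by
      field_simp at hx ⊢
      exact hx
    have hdeg := congrArg RatFunc.intDegree h2
    rw [RatFunc.intDegree_C, RatFunc.intDegree_mul hX hX, RatFunc.intDegree_X] at hdeg
    norm_num at hdeg


@[simp] theorem dih_r {n : ℕ} [NeZero n] {ζ c : K} (hζ : IsPrimitiveRoot ζ n) (hc : c ≠ 0)
    (i : ZMod n) : dih hζ hc (.r i) = sca _ (chi_ne_zero hζ.ne_zero'' i) := rfl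

@[simp] theorem dih_sr {n : ℕ} [NeZero n] {ζ c : K} (hζ : IsPrimitiveRoot ζ n) (hc : c ≠ 0)
    (i : ZMod n) : dih hζ hc (.sr i) = flp _ (mul_ne_zero hc (chi_ne_zero hζ.ne_zero'' i)) := rfl

theorem algebraMap_poly_eq_aeval (p : K[X]) :
    algebraMap K[X] (RatFunc K) p = Polynomial.aeval (RatFunc.X : RatFunc K) p := by
  rw [← RatFunc.algebraMap_X, Polynomial.aeval_algebraMap_apply, Polynomial.aeval_X_left_apply]

end Stmt16Aux


open RatFunc

open IntermediateField

set_option maxHeartbeats 1000000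
set_option synthInstance.maxHeartbeats 400000

/-- For `q ≥ 7`, `γ ∈ 𝔽_q \ {±1}` with `γ^((q-1)/2) = 1`, and
`f = X^((q+1)/2) − γ·X^(-(q+1)/2) ∈ k(X)`, the extension `k(X)/k(f)` is Galois with
Galois group isomorphic to the dihedral group of order `q + 1`. -/
theorem stmt_16 (p e q : ℕ) (hp : p.Prime) (hp2 : p ≠ 2) (hq : q = p ^ e) (hq7 : 7 ≤ q)
    (k : Type*) [Field k] [IsAlgClosed k] [CharP k p]
    (γ : k) (hγq : γ ^ q = γ) (hγsq : γ ^ ((q - 1) / 2) = 1) (hγ1 : γ ≠ 1) (hγm1 : γ ≠ -1)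
    (f : RatFunc k)
    (hf : f = RatFunc.X ^ ((q + 1) / 2) - RatFunc.C γ * (RatFunc.X ^ ((q + 1) / 2))⁻¹) :
    IsGalois (IntermediateField.adjoin k {f}) (RatFunc k) ∧
      Nonempty ((RatFunc k ≃ₐ[IntermediateField.adjoin k {f}] RatFunc k) ≃*
        DihedralGroup ((q + 1) / 2)) := by
  classical
  set n := (q + 1) / 2 with hn
  -- arithmetic preliminaries
  have hqodd : Odd q := hq ▸ (hp.odd_of_ne_two hp2).pow
  have h2n : 2 * n = q + 1 := by
    obtain ⟨m, hm⟩ := hqodd; omega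
  have hn4 : 4 ≤ n := by omega
  haveI : NeZero n := ⟨by omega⟩
  have hpn : ¬ (p ∣ n) := by
    intro hdvd
    have he : e ≠ 0 := by
      rintro rfl
      rw [pow_zero] at hq; omega
    have hpq : p ∣ q := hq ▸ dvd_pow_self p he
    have h1 : p ∣ 2 * n := hdvd.mul_left 2
    have : p ∣ 1 := by
      have := Nat.dvd_sub h1 hpq
      rwa [h2n, Nat.add_sub_cancel_left] at this
    have h1' := Nat.dvd_one.mp this
    have := hp.one_lt
    omega
  haveI : NeZero ((n : k)) := ⟨by
    rw [Ne, CharP.cast_eq_zero_iff k p]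
    exact hpn⟩
  obtain ⟨ζ, hζ⟩ := HasEnoughRootsOfUnity.exists_primitiveRoot k n
  have hγ0 : γ ≠ 0 := by
    rintro rfl
    rw [zero_pow (by omega : (q - 1) / 2 ≠ 0)] at hγsq
    exact zero_ne_one hγsq
  obtain ⟨c, hc⟩ := IsAlgClosed.exists_pow_nat_eq (-γ) (n := n) (by omega)
  have hc0 : c ≠ 0 := by
    rintro rfl
    rw [zero_pow (by omega : n ≠ 0)] at hc
    exact hγ0 (neg_eq_zero.mp hc.symm)
  let φ : DihedralGroup n →* (RatFunc k ≃ₐ[k] RatFunc k) := Stmt16Aux.dih hζ hc0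
  have hX : (RatFunc.X : RatFunc k) ≠ 0 := RatFunc.X_ne_zero
  have hXn : (RatFunc.X : RatFunc k) ^ n ≠ 0 := pow_ne_zero _ hX
  -- every group element fixes f
  have key1 : ∀ (a : k) (ha : a ≠ 0), a ^ n = 1 → Stmt16Aux.sca a ha f = f := by
    intro a ha h1
    rw [hf]
    simp only [map_sub, map_mul, map_inv₀, map_pow, Stmt16Aux.sca_X, Stmt16Aux.sca_C]
    rw [mul_pow, ← map_pow, h1, map_one, one_mul]
  have key2 : ∀ (a : k) (ha : a ≠ 0), a ^ n = -γ → Stmt16Aux.flp a ha f = f := by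
    intro a ha h1
    rw [hf]
    simp only [map_sub, map_mul, map_inv₀, map_pow, map_neg, Stmt16Aux.flp_X, Stmt16Aux.flp_C]
    rw [mul_pow, ← map_pow, h1, map_neg]
    have hCγ : (RatFunc.C γ : RatFunc k) ≠ 0 := Stmt16Aux.C_ne_zero' hγ0
    field_simp
    have hY : (1 / (RatFunc.X : RatFunc k)) ^ n * RatFunc.X ^ n = 1 := by
      rw [← mul_pow, one_div, inv_mul_cancel₀ hX, one_pow]
    linear_combination (-(RatFunc.C γ) * (1 / (RatFunc.X : RatFunc k)) ^ n - RatFunc.X ^ n) * hY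
  have hfix : ∀ g : DihedralGroup n, φ g f = f := by
    rintro (i | i)
    · rw [show φ (DihedralGroup.r i) =
          Stmt16Aux.sca _ (Stmt16Aux.chi_ne_zero hζ.ne_zero'' i) from rfl]
      exact key1 _ _ (Stmt16Aux.chi_pow_n hζ.pow_eq_one i)
    · rw [show φ (DihedralGroup.sr i) =
          Stmt16Aux.flp _ (mul_ne_zero hc0 (Stmt16Aux.chi_ne_zero hζ.ne_zero'' i)) from rfl]
      refine key2 _ _ ?_
      rw [mul_pow, hc, Stmt16Aux.chi_pow_n hζ.pow_eq_one i, mul_one]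
  set F := IntermediateField.adjoin k {f} with hF
  have hsub : MonoidHom.range φ ≤ F.fixingSubgroup := by
    rw [← IntermediateField.le_iff_le, hF, IntermediateField.adjoin_le_iff,
      Set.singleton_subset_iff]
    show f ∈ MulAction.fixedPoints (MonoidHom.range φ) (RatFunc k)
    rw [MulAction.mem_fixedPoints]
    rintro ⟨σ, g, rfl⟩
    show φ g • f = f
    rw [AlgEquiv.smul_def]
    exact hfix g
  let ψ' : DihedralGroup n →* F.fixingSubgroup :=
    φ.codRestrict F.fixingSubgroup (fun g => hsub ⟨g, rfl⟩)
  let ψ : DihedralGroup n →* (RatFunc k ≃ₐ[F] RatFunc k) :=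
    (IntermediateField.fixingSubgroupEquiv F).toMonoidHom.comp ψ'
  have hψinj : Function.Injective ψ := by
    intro a b hab
    apply Stmt16Aux.dih_injective hζ hc0
    have h1 : ψ' a = ψ' b := (IntermediateField.fixingSubgroupEquiv F).injective hab
    exact Subtype.ext_iff.mp h1
  -- X is integral over F of degree ≤ 2n
  let fF : F := ⟨f, IntermediateField.mem_adjoin_simple_self k f⟩
  let P : Polynomial F := Polynomial.X ^ (2 * n) -
    (Polynomial.C fF * Polynomial.X ^ n + Polynomial.C (algebraMap k F γ))
  have hdeglt : (Polynomial.C fF * Polynomial.X ^ n +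
      Polynomial.C (algebraMap k F γ)).degree < (Polynomial.X ^ (2 * n) : Polynomial F).degree := by
    rw [Polynomial.degree_X_pow]
    apply lt_of_le_of_lt (Polynomial.degree_add_le _ _)
    rw [max_lt_iff]
    constructor
    · apply lt_of_le_of_lt (Polynomial.degree_mul_le _ _)
      apply lt_of_le_of_lt (add_le_add Polynomial.degree_C_le
        (le_of_eq (Polynomial.degree_X_pow n)))
      rw [zero_add]
      exact_mod_cast by exact_mod_cast Nat.cast_lt.mpr (by omega : n < 2 * n)
    · exact lt_of_le_of_lt Polynomial.degree_C_le (by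
        exact_mod_cast Nat.cast_lt.mpr (by omega : 0 < 2 * n))
  have hPmonic : P.Monic := (Polynomial.monic_X_pow _).sub_of_left hdeglt
  have hPdeg : P.natDegree = 2 * n := by
    have := Polynomial.degree_sub_eq_left_of_degree_lt hdeglt
    rw [Polynomial.degree_X_pow] at this
    exact Polynomial.natDegree_eq_of_degree_eq_some this
  have hPaeval : Polynomial.aeval (RatFunc.X : RatFunc k) P = 0 := by
    simp only [P, map_sub, map_add, map_mul, map_pow, Polynomial.aeval_X, Polynomial.aeval_C]
    have h1 : algebraMap F (RatFunc k) fF = f := rfl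
    have h2 : algebraMap F (RatFunc k) (algebraMap k F γ) = RatFunc.C γ := by
      rw [← IsScalarTower.algebraMap_apply, RatFunc.algebraMap_eq_C]
    rw [h1, h2, hf]
    field_simp
    ring
  have hXint : IsIntegral F (RatFunc.X : RatFunc k) := ⟨P, hPmonic, by rwa [← Polynomial.aeval_def]⟩
  -- F⟮X⟯ = ⊤
  have htop : F⟮(RatFunc.X : RatFunc k)⟯ = ⊤ := by
    rw [eq_top_iff]
    intro x _
    induction x using RatFunc.induction_on with
    | f p q' hq' =>
      have hmem : ∀ r : Polynomial k, algebraMap (Polynomial k) (RatFunc k) r ∈ F⟮(RatFunc.X : RatFunc k)⟯ := by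
        intro r
        rw [Stmt16Aux.algebraMap_poly_eq_aeval]
        induction r using Polynomial.induction_on with
        | C a =>
          rw [Polynomial.aeval_C]
          rw [IsScalarTower.algebraMap_apply k F (RatFunc k)]
          exact IntermediateField.algebraMap_mem _ _
        | add r s hr hs =>
          rw [map_add]; exact add_mem hr hs
        | monomial m a hm =>
          rw [pow_succ, ← mul_assoc, map_mul]
          refine mul_mem hm ?_
          rw [Polynomial.aeval_X]
          exact IntermediateField.mem_adjoin_simple_self F _
      exact div_mem (hmem p) (hmem q')
  haveI hFD1 : FiniteDimensional F F⟮(RatFunc.X : RatFunc k)⟯ :=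
    IntermediateField.adjoin.finiteDimensional hXint
  let eqv : F⟮(RatFunc.X : RatFunc k)⟯ ≃ₐ[F] RatFunc k :=
    (IntermediateField.equivOfEq htop).trans IntermediateField.topEquiv
  haveI hFD : FiniteDimensional F (RatFunc k) := LinearEquiv.finiteDimensional eqv.toLinearEquiv
  have hfr1 : Module.finrank F (RatFunc k) = (minpoly F (RatFunc.X : RatFunc k)).natDegree := by
    rw [← IntermediateField.adjoin.finrank hXint]
    exact (eqv.toLinearEquiv.finrank_eq).symm
  have hfr2 : Module.finrank F (RatFunc k) ≤ 2 * n := by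
    rw [hfr1, ← hPdeg]
    exact Polynomial.natDegree_le_of_dvd
      (minpoly.dvd F _ hPaeval) hPmonic.ne_zero
  -- counting
  have hcard1 : 2 * n ≤ Fintype.card (RatFunc k ≃ₐ[F] RatFunc k) := by
    rw [← DihedralGroup.card (n := n)]
    exact Fintype.card_le_of_injective ψ hψinj
  have hcard2 : Fintype.card (RatFunc k ≃ₐ[F] RatFunc k) ≤ Module.finrank F (RatFunc k) := by
    rw [Fintype.card_congr (Algebra.IsAlgebraic.algEquivEquivAlgHom F (RatFunc k)).toEquiv]
    exact le_trans (_root_.finrank_algHom F (RatFunc k))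
      (le_of_eq (Module.finrank_linearMap_self F (RatFunc k) (RatFunc k)))
  have hEq : Fintype.card (RatFunc k ≃ₐ[F] RatFunc k) = Module.finrank F (RatFunc k) := by omega
  haveI hgal : IsGalois F (RatFunc k) := IsGalois.of_card_aut_eq_finrank _ _ (by rw [Nat.card_eq_fintype_card]; exact hEq)
  refine ⟨hgal, ⟨?_⟩⟩
  have hbij : Function.Bijective ψ :=
    (Fintype.bijective_iff_injective_and_card ψ).mpr
      ⟨hψinj, by rw [DihedralGroup.card]; omega⟩
  exact (MulEquiv.ofBijective ψ hbij).symm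
end

section
/- Let γ ∈ k satisfy γ^q = γ, γ^{(q−1)/2} = 1 and γ ≠ −1, and consider the polynomial P = ((X+1)(X + γ·1))^{(q+1)/2} − X^{q+1} + γ·1 ∈ k[X]. Then P has degree exactly q, its leading coefficient (the coefficient of X^q) equals c·(γ+1) where c ∈ k is the image of the natural number (q+1)/2 (in particular it is nonzero), and its constant coefficient equals 2γ. (This shows that the projection of the curve C₄ from the point Q = φ₄(1:0) = (0:1:1) has degree q, hence that φ₄ is birational onto its image.) -/
open Polynomial

/-- For `γ` with `γ^q = γ`, `γ^((q-1)/2) = 1`, `γ ≠ -1`, the polynomial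
`P = ((X+1)(X+γ))^((q+1)/2) − X^(q+1) + γ ∈ k[X]` has degree exactly `q`, its
coefficient of `X^q` equals `c·(γ+1)` with `c` the image of `(q+1)/2` in `k`
(in particular nonzero), and its constant coefficient equals `2γ`. -/
theorem stmt_19 (p e q : ℕ) (hp : p.Prime) (hp2 : p ≠ 2) (hq : q = p ^ e) (hq5 : 5 ≤ q)
    (k : Type*) [Field k] [IsAlgClosed k] [CharP k p]
    (γ : k) (hγq : γ ^ q = γ) (hγsq : γ ^ ((q - 1) / 2) = 1) (hγm1 : γ ≠ -1)
    (c : k) (hc : c = (((q + 1) / 2 : ℕ) : k))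
    (P : k[X])
    (hP : P = ((X + 1) * (X + C γ * 1)) ^ ((q + 1) / 2) - X ^ (q + 1) + C γ * 1) :
    P.degree = q ∧ P.coeff q = c * (γ + 1) ∧ P.coeff q ≠ 0 ∧ P.coeff 0 = 2 * γ := by
  have he : e ≠ 0 := by rintro rfl; simp [hq] at hq5
  have hqodd : Odd q := hq ▸ (hp.odd_of_ne_two hp2).pow
  set m : ℕ := (q + 1) / 2 with hm
  have h2m : 2 * m = q + 1 := by obtain ⟨t, ht⟩ := hqodd; omega
  set A : k[X] := (X + 1) * (X + C γ * 1) with hA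
  have hA' : A = (X + C (1:k)) * (X + C γ) := by simp [hA]
  have hAm : A.Monic := by rw [hA']; exact (monic_X_add_C _).mul (monic_X_add_C _)
  have hAd : A.natDegree = 2 := by
    rw [hA', (monic_X_add_C (1:k)).natDegree_mul (monic_X_add_C γ),
      natDegree_X_add_C, natDegree_X_add_C]
  have hM : (A ^ m).Monic := hAm.pow m
  have hMne : (A ^ m) ≠ 0 := hM.ne_zero
  have hMd : (A ^ m).natDegree = q + 1 := by
    rw [hAm.natDegree_pow, hAd]; omega
  have hnext : (A ^ m).nextCoeff = (m : k) * (1 + γ) := by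
    rw [hAm.nextCoeff_pow]
    have h1 : A.nextCoeff = 1 + γ := by
      rw [hA', (monic_X_add_C (1:k)).nextCoeff_mul (monic_X_add_C γ),
        nextCoeff_X_add_C, nextCoeff_X_add_C]
    rw [h1, nsmul_eq_mul]
  have hcoeffq : (A ^ m).coeff q = (m : k) * (1 + γ) := by
    have h := hnext
    rwa [nextCoeff_of_natDegree_pos (by omega), hMd, Nat.add_sub_cancel] at h
  have hqk : ((q : ℕ) : k) = 0 := by
    rw [hq]; push_cast
    rw [CharP.cast_eq_zero k p, zero_pow he]
  have hc2 : (2 : k) * c = 1 := by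
    rw [hc]
    have h : ((2 * m : ℕ) : k) = ((q + 1 : ℕ) : k) := by rw [h2m]
    push_cast at h
    rw [hqk] at h
    linear_combination h
  have hcne : c ≠ 0 := fun h => by simp [h] at hc2
  have hγ1 : γ + 1 ≠ 0 := fun h => hγm1 (by linear_combination h)
  have hPq : P.coeff q = c * (γ + 1) := by
    rw [hP]
    simp only [coeff_add, coeff_sub]
    rw [hcoeffq, coeff_X_pow]
    have h0 : (C γ * 1).coeff q = 0 := by
      rw [mul_one, coeff_C, if_neg (by omega)]
    rw [h0, if_neg (by omega), hc]
    ring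
  have hPqne : P.coeff q ≠ 0 := by rw [hPq]; exact mul_ne_zero hcne hγ1
  have hdeg : P.degree = q := by
    apply degree_eq_of_le_of_coeff_ne_zero _ hPqne
    rw [degree_le_iff_coeff_zero]
    intro b hb
    have hqb : q < b := by exact_mod_cast hb
    rw [hP]
    simp only [coeff_add, coeff_sub, coeff_X_pow, mul_one, coeff_C]
    rcases eq_or_ne b (q + 1) with rfl | hne
    · have hlc := hM.coeff_natDegree
      rw [hMd] at hlc
      rw [hlc, if_pos rfl, if_neg (by omega)]
      ring
    · have hz : (A ^ m).coeff b = 0 := coeff_eq_zero_of_natDegree_lt (by omega)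
      rw [hz, if_neg (fun h => hne h), if_neg (by omega)]
      ring
  refine ⟨hdeg, hPq, hPqne, ?_⟩
  have hγm : γ ^ m = γ := by
    have hm' : m = (q - 1) / 2 + 1 := by obtain ⟨t, ht⟩ := hqodd; omega
    rw [hm', pow_succ, hγsq, one_mul]
  rw [hP, coeff_zero_eq_eval_zero]
  simp only [eval_add, eval_sub, eval_mul, eval_pow, eval_X, eval_one, eval_C, zero_add]
  rw [zero_pow (by omega : q + 1 ≠ 0)]
  have hA0 : eval 0 A = γ := by rw [hA]; simp
  rw [hA0, hγm]
  ring
end
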